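/- Let k ≥ 1 and let D be a digraph with a maximal spanning out-tree T. If D contains a back-mixed cycle with respect to T, then D contains a subdivision of C(k,1,1,1). -/

import Mathlib

universe u
variable {V : Type u}

/-- Directed walks of a given length along a relation. -/
inductive DWalk (T : V → V → Prop) : V → V → ℕ → Prop
  | refl (v : V) : DWalk T v v 0
  | cons {u v w : V} {n : ℕ} : T u v → DWalk T v w n → DWalk T u w (n + 1)

/-- `Anc T y x` : `y` is an ancestor of `x` in `T` (`y ≤_T x`). -/
def Anc (T : V → V → Prop) (y x : V) : Prop := Relation.ReflTransGen T y x

/-- `T` is an out-tree of the digraph `D` with vertex set `S` and root `r`. -/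
def IsOutTreeOn (D T : V → V → Prop) (S : Set V) (r : V) : Prop :=
  r ∈ S ∧ (∀ x y, T x y → D x y ∧ x ∈ S ∧ y ∈ S) ∧ (∀ v, ¬ T v r) ∧
  (∀ v ∈ S, v ≠ r → ∃! u, T u v) ∧ (∀ v ∈ S, Relation.ReflTransGen T r v)

/-- `T` is a spanning out-tree of `D` rooted at `r`. -/
def IsSpanningOutTree (D T : V → V → Prop) (r : V) : Prop :=
  IsOutTreeOn D T Set.univ r

/-- `lvl` is the level function of the out-tree `T` rooted at `r`. -/
def IsLevelFun (T : V → V → Prop) (r : V) (lvl : V → ℕ) : Prop :=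
  ∀ v, DWalk T r v (lvl v)

/-- `T` is a maximal spanning out-tree of `D`: for every backward arc `(x,y)`
(`l_T(x) ≥ l_T(y)`) there is a directed path from `y` to `x` in `T`. -/
def IsMaximalSOT (D T : V → V → Prop) (r : V) (lvl : V → ℕ) : Prop :=
  IsSpanningOutTree D T r ∧ IsLevelFun T r lvl ∧
    ∀ x y, D x y → lvl y ≤ lvl x → Anc T y x

/-- `l` is the vertex list of a directed path from `a` to `b` in `D`. -/
def IsDPath (D : V → V → Prop) (a b : V) (l : List V) : Prop :=
  l.head? = some a ∧ l.getLast? = some b ∧ l.Chain' D ∧ l.Nodup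

/-- Interior vertices of a path given by its vertex list. -/
def pint (l : List V) : List V := l.tail.dropLast

/-- `D` contains a subdivision of the four-blocks cycle `C(k,1,1,1)`:
four internally disjoint directed paths `x1→y1` (length ≥ k), `x2→y1`, `x2→y2`, `x1→y2`
(lengths ≥ 1). -/
def HasSubdivCk111 (D : V → V → Prop) (k : ℕ) : Prop :=
  ∃ (x1 x2 y1 y2 : V) (p1 p2 p3 p4 : List V),
    IsDPath D x1 y1 p1 ∧ IsDPath D x2 y1 p2 ∧ IsDPath D x2 y2 p3 ∧ IsDPath D x1 y2 p4 ∧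
    k + 1 ≤ p1.length ∧ 2 ≤ p2.length ∧ 2 ≤ p3.length ∧ 2 ≤ p4.length ∧
    x1 ≠ x2 ∧ x1 ≠ y1 ∧ x1 ≠ y2 ∧ x2 ≠ y1 ∧ x2 ≠ y2 ∧ y1 ≠ y2 ∧
    (∀ v, (v = x1 ∨ v = x2 ∨ v = y1 ∨ v = y2) →
      v ∉ pint p1 ∧ v ∉ pint p2 ∧ v ∉ pint p3 ∧ v ∉ pint p4) ∧
    (∀ v ∈ pint p1, v ∉ pint p2 ∧ v ∉ pint p3 ∧ v ∉ pint p4) ∧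
    (∀ v ∈ pint p2, v ∉ pint p3 ∧ v ∉ pint p4) ∧
    (∀ v ∈ pint p3, v ∉ pint p4)

/-- Disjointness conditions making `2*m` blocks (paths `P j : x j → y j` and
`Q j : x (j+1) → y j`) into an oriented cycle with `2*m` blocks. -/
def BlockDisjoint (m : ℕ) (x y : ℕ → V) (P Q : ℕ → List V) : Prop :=
  (∀ i < m, ∀ j < m, i ≠ j → x i ≠ x j) ∧
  (∀ i < m, ∀ j < m, i ≠ j → y i ≠ y j) ∧
  (∀ i < m, ∀ j < m, x i ≠ y j) ∧
  (∀ i < m, ∀ j < m, ∀ v, (v ∈ pint (P i) ∨ v ∈ pint (Q i)) → v ≠ x j ∧ v ≠ y j) ∧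
  (∀ i < m, ∀ j < m, i ≠ j → ∀ v, v ∈ pint (P i) → v ∉ pint (P j)) ∧
  (∀ i < m, ∀ j < m, i ≠ j → ∀ v, v ∈ pint (Q i) → v ∉ pint (Q j)) ∧
  (∀ i < m, ∀ j < m, ∀ v, v ∈ pint (P i) → v ∉ pint (Q j))

/-- The relation `R` contains an oriented cycle with exactly `2*m` blocks. -/
def HasBlockCycle (R : V → V → Prop) (m : ℕ) : Prop :=
  ∃ (x y : ℕ → V) (P Q : ℕ → List V),
    (∀ j < m, IsDPath R (x j) (y j) (P j) ∧ 2 ≤ (P j).length) ∧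
    (∀ j < m, IsDPath R (x ((j + 1) % m)) (y j) (Q j) ∧ 2 ≤ (Q j).length) ∧
    BlockDisjoint m x y P Q

/-- Arcs of `D_i^1` : arcs of `D` inside the residue class `i mod k` of levels
which are forward for the tree order. -/
def Di1 (D T : V → V → Prop) (lvl : V → ℕ) (k i : ℕ) : V → V → Prop :=
  fun a b => D a b ∧ lvl a % k = i ∧ lvl b % k = i ∧ Anc T a b

/-- Arcs of `D_i^2` : backward for the tree order. -/
def Di2 (D T : V → V → Prop) (lvl : V → ℕ) (k i : ℕ) : V → V → Prop :=
  fun a b => D a b ∧ lvl a % k = i ∧ lvl b % k = i ∧ Anc T b a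

/-- Arcs of `D_i^3` : between tree-incomparable vertices. -/
def Di3 (D T : V → V → Prop) (lvl : V → ℕ) (k i : ℕ) : V → V → Prop :=
  fun a b => D a b ∧ lvl a % k = i ∧ lvl b % k = i ∧ ¬ Anc T a b ∧ ¬ Anc T b a

/-- `D` contains a mixed cycle with respect to `T` (and the level function `lvl`). -/
def HasMixedCycle (D T : V → V → Prop) (lvl : V → ℕ) (k : ℕ) : Prop :=
  ∃ i < k, ∃ m, 2 ≤ m ∧ ∃ (x y : ℕ → V) (P Q : ℕ → List V) (z1 : V) (l1 l2 : List V),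
    IsDPath D (x 0) (y 0) (P 0) ∧
    P 0 = l1 ++ z1 :: l2 ∧ z1 ≠ y 0 ∧
    List.Chain' T (l1 ++ [z1]) ∧ List.Chain' (Di1 D T lvl k i) (z1 :: l2) ∧
    (∀ j, 1 ≤ j → j < m → IsDPath (Di1 D T lvl k i) (x j) (y j) (P j) ∧ 2 ≤ (P j).length) ∧
    (∀ j < m, IsDPath (Di1 D T lvl k i) (x ((j + 1) % m)) (y j) (Q j) ∧ 2 ≤ (Q j).length) ∧
    BlockDisjoint m x y P Q ∧
    (∀ j < m, Anc T (x j) (x 0) → Anc T (x 0) (x j))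

/-- `D` contains a back-mixed cycle with respect to `T`. -/
def HasBackMixedCycle (D T : V → V → Prop) (lvl : V → ℕ) (k : ℕ) : Prop :=
  ∃ i < k, ∃ m, 3 ≤ m ∧ ∃ (x y : ℕ → V) (P Q : ℕ → List V) (z1 : V) (l1 l2 : List V),
    (∀ j < m, IsDPath (Di2 D T lvl k i) (y j) (x j) (P j) ∧ 2 ≤ (P j).length) ∧
    (∀ j, j < m - 1 → IsDPath (Di2 D T lvl k i) (y j) (x ((j + 1) % m)) (Q j) ∧ 2 ≤ (Q j).length) ∧
    IsDPath D (y (m - 1)) (x 0) (Q (m - 1)) ∧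
    Q (m - 1) = l1 ++ z1 :: l2 ∧ z1 ≠ y (m - 1) ∧
    List.Chain' (Di2 D T lvl k i) (l1 ++ [z1]) ∧ List.Chain' T (z1 :: l2) ∧
    BlockDisjoint m y x P Q ∧
    (∀ j < m, ∀ v, (v ∈ P j ∨ v ∈ Q j) → Anc T v z1 → Anc T z1 v)

/-- `G` contains a wheel as a subgraph: a chordless cycle together with a vertex
adjacent to at least three vertices of the cycle. -/
def HasWheel (G : SimpleGraph V) : Prop :=
  ∃ (n : ℕ) (c : Fin (n + 3) → V) (v : V),
    Function.Injective c ∧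
    (∀ i, G.Adj (c i) (c (i + 1))) ∧
    (∀ i j, G.Adj (c i) (c j) → j = i + 1 ∨ i = j + 1) ∧
    (∀ i, v ≠ c i) ∧
    (∃ i1 i2 i3 : Fin (n + 3), i1 ≠ i2 ∧ i1 ≠ i3 ∧ i2 ≠ i3 ∧
      G.Adj v (c i1) ∧ G.Adj v (c i2) ∧ G.Adj v (c i3))

/- ===================== Auxiliary development ===================== -/

namespace BMAux

open Relation

variable {V : Type u} {T : V → V → Prop} {r : V} {lvl : V → ℕ}

theorem dwalk_snoc {a b c : V} {n : ℕ} (h : DWalk T a b n) (h2 : T b c) :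
    DWalk T a c (n + 1) := by
  induction h with
  | refl v => exact DWalk.cons h2 (DWalk.refl c)
  | cons hT _ ih => exact DWalk.cons hT (ih h2)

theorem dwalk_zero {a b : V} (h : DWalk T a b 0) : a = b := by cases h; rfl

theorem dwalk_back {a c : V} {n : ℕ} (h : DWalk T a c (n + 1)) :
    ∃ b, DWalk T a b n ∧ T b c := by
  induction n generalizing a with
  | zero =>
    cases h with
    | cons hT w => exact ⟨a, DWalk.refl a, by rwa [dwalk_zero w] at hT⟩
  | succ n ih =>
    cases h with
    | cons hT w =>
      obtain ⟨b, wb, hbc⟩ := ih w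
      exact ⟨b, DWalk.cons hT wb, hbc⟩

open Relation in
theorem dwalk_anc {u v : V} {n : ℕ} (h : DWalk T u v n) : Anc T u v := by
  induction h with
  | refl v => exact ReflTransGen.refl
  | cons hT _ ih => exact ReflTransGen.head hT ih

theorem dwalk_split {a c : V} {p q : ℕ} (h : DWalk T a c (p + q)) :
    ∃ b, DWalk T a b p ∧ DWalk T b c q := by
  induction p generalizing a with
  | zero => exact ⟨a, DWalk.refl a, by simpa using h⟩
  | succ p ih =>
    have h' : DWalk T a c ((p + q) + 1) := by
      have : p + 1 + q = (p + q) + 1 := by omega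
      rwa [this] at h
    cases h' with
    | cons hT w =>
      obtain ⟨b, hb1, hb2⟩ := ih w
      exact ⟨b, DWalk.cons hT hb1, hb2⟩

section Tree

variable (hr : ∀ v, ¬ T v r) (hu : ∀ v, v ≠ r → ∃! u, T u v)

include hr hu

theorem dwalk_src_unique {a b c : V} {n : ℕ}
    (ha : DWalk T a c n) (hb : DWalk T b c n) : a = b := by
  induction n generalizing c with
  | zero => rw [dwalk_zero ha, dwalk_zero hb]
  | succ n ih =>
    obtain ⟨w, hw, hwc⟩ := dwalk_back ha
    obtain ⟨w', hw', hw'c⟩ := dwalk_back hb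
    have hcr : c ≠ r := fun h => hr w (h ▸ hwc)
    obtain ⟨u, _, huq⟩ := hu c hcr
    have h12 : w' = w := (huq w' hw'c).trans (huq w hwc).symm
    rw [h12] at hw'
    exact ih hw hw'

theorem dwalk_len_unique {v : V} {n n' : ℕ}
    (h1 : DWalk T r v n) (h2 : DWalk T r v n') : n = n' := by
  induction n generalizing v n' with
  | zero =>
    cases dwalk_zero h1
    cases n' with
    | zero => rfl
    | succ m => obtain ⟨b, _, hb⟩ := dwalk_back h2; exact absurd hb (hr b)
  | succ n ih =>
    obtain ⟨b, hb, hbv⟩ := dwalk_back h1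
    cases n' with
    | zero =>
      cases dwalk_zero h2
      exact absurd hbv (hr b)
    | succ m =>
      obtain ⟨b', hb', hb'v⟩ := dwalk_back h2
      have hvr : v ≠ r := fun h => hr b (h ▸ hbv)
      obtain ⟨u, _, huq⟩ := hu v hvr
      have : b = b' := (huq b hbv).trans (huq b' hb'v).symm
      rw [ih hb (this ▸ hb')]

variable (hlvl : ∀ v, DWalk T r v (lvl v))

include hlvl

theorem lvl_succ {a b : V} (h : T a b) : lvl b = lvl a + 1 :=
  dwalk_len_unique hr hu (hlvl b) (dwalk_snoc (hlvl a) h)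

theorem anc_dwalk' {u v : V} (h : Anc T u v) :
    lvl u ≤ lvl v ∧ DWalk T u v (lvl v - lvl u) := by
  induction h with
  | refl => exact ⟨le_refl _, by simpa using DWalk.refl u⟩
  | @tail b c hb hbc ih =>
    obtain ⟨hle, hw⟩ := ih
    have hs := lvl_succ hr hu hlvl hbc
    refine ⟨by omega, ?_⟩
    have h2 := dwalk_snoc hw hbc
    have harith : lvl b - lvl u + 1 = lvl c - lvl u := by omega
    rwa [harith] at h2

theorem anc_lvl_le {u v : V} (h : Anc T u v) : lvl u ≤ lvl v :=
  (anc_dwalk' hr hu hlvl h).1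

theorem anc_dwalk {u v : V} (h : Anc T u v) : DWalk T u v (lvl v - lvl u) :=
  (anc_dwalk' hr hu hlvl h).2

theorem anc_antisymm {u v : V} (h1 : Anc T u v) (h2 : Anc T v u) : u = v := by
  have l1 := anc_lvl_le hr hu hlvl h1
  have l2 := anc_lvl_le hr hu hlvl h2
  have : lvl v - lvl u = 0 := by omega
  have hw := anc_dwalk hr hu hlvl h1
  rw [this] at hw
  exact dwalk_zero hw

theorem anc_of_anc_anc {u v w : V} (h1 : Anc T u w) (h2 : Anc T v w)
    (hle : lvl u ≤ lvl v) : Anc T u v := by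
  have lv := anc_lvl_le hr hu hlvl h2
  have w1 := anc_dwalk hr hu hlvl h1
  have w2 := anc_dwalk hr hu hlvl h2
  have harith : lvl w - lvl u = (lvl v - lvl u) + (lvl w - lvl v) := by omega
  rw [harith] at w1
  obtain ⟨b, hb1, hb2⟩ := dwalk_split w1
  have : b = v := dwalk_src_unique hr hu hb2 w2
  exact this ▸ dwalk_anc hb1

theorem anc_total {u v w : V} (h1 : Anc T u w) (h2 : Anc T v w) :
    Anc T u v ∨ Anc T v u := by
  rcases le_total (lvl u) (lvl v) with h | h
  · exact Or.inl (anc_of_anc_anc hr hu hlvl h1 h2 h)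
  · exact Or.inr (anc_of_anc_anc hr hu hlvl h2 h1 h)

theorem anc_lvl_lt {u v : V} (h : Anc T u v) (hne : u ≠ v) : lvl u < lvl v := by
  have hle := anc_lvl_le hr hu hlvl h
  rcases lt_or_eq_of_le hle with h' | h'
  · exact h'
  · exfalso
    have hw := anc_dwalk hr hu hlvl h
    have : lvl v - lvl u = 0 := by omega
    rw [this] at hw
    exact hne (dwalk_zero hw)

end Tree

end BMAux
namespace BMAux2

open Relation BMAux List

variable {V : Type u} {T : V → V → Prop} {r : V} {lvl : V → ℕ}

/- ---------- generic chain lemmas ---------- -/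

theorem chain'_asc_head {R : V → V → Prop} (hR : ∀ a b, R a b → Anc T a b) :
    ∀ {l : List V} {a : V}, l.Chain' R → l.head? = some a → ∀ w ∈ l, Anc T a w := by
  intro l
  induction l with
  | nil => intro a _ _ w hw; simp at hw
  | cons x t ih =>
    intro a hc hh w hw
    simp at hh; subst hh
    rcases List.mem_cons.mp hw with h | h
    · subst h; exact ReflTransGen.refl
    · cases t with
      | nil => simp at h
      | cons y t' =>
        have h1 : R x y := (List.isChain_cons_cons.mp hc).1
        have h2 : (y :: t').Chain' R := (List.isChain_cons_cons.mp hc).2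
        exact ReflTransGen.trans (hR _ _ h1) (ih h2 rfl w h)

theorem chain'_asc_last {R : V → V → Prop} (hR : ∀ a b, R a b → Anc T a b) :
    ∀ {l : List V} {b : V}, l.Chain' R → l.getLast? = some b → ∀ w ∈ l, Anc T w b := by
  intro l
  induction l with
  | nil => intro b _ _ w hw; simp at hw
  | cons x t ih =>
    intro b hc hl w hw
    cases t with
    | nil =>
      simp at hl hw
      subst hl; subst hw; exact ReflTransGen.refl
    | cons y t' =>
      have h1 : R x y := (List.isChain_cons_cons.mp hc).1
      have h2 : (y :: t').Chain' R := (List.isChain_cons_cons.mp hc).2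
      have hl' : (y :: t').getLast? = some b := by
        rwa [List.getLast?_cons_cons] at hl
      rcases List.mem_cons.mp hw with h | h
      · subst h
        exact ReflTransGen.trans (hR _ _ h1) (ih h2 hl' y (by simp))
      · exact ih h2 hl' w h

theorem chain'_desc_head {R : V → V → Prop} (hR : ∀ a b, R a b → Anc T b a) :
    ∀ {l : List V} {a : V}, l.Chain' R → l.head? = some a → ∀ w ∈ l, Anc T w a := by
  intro l
  induction l with
  | nil => intro a _ _ w hw; simp at hw
  | cons x t ih =>
    intro a hc hh w hw
    simp at hh; subst hh
    rcases List.mem_cons.mp hw with h | h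
    · subst h; exact ReflTransGen.refl
    · cases t with
      | nil => simp at h
      | cons y t' =>
        have h1 : R x y := (List.isChain_cons_cons.mp hc).1
        have h2 : (y :: t').Chain' R := (List.isChain_cons_cons.mp hc).2
        exact ReflTransGen.trans (ih h2 rfl w h) (hR _ _ h1)

theorem chain'_desc_last {R : V → V → Prop} (hR : ∀ a b, R a b → Anc T b a) :
    ∀ {l : List V} {b : V}, l.Chain' R → l.getLast? = some b → ∀ w ∈ l, Anc T b w := by
  intro l
  induction l with
  | nil => intro b _ _ w hw; simp at hw
  | cons x t ih =>
    intro b hc hl w hw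
    cases t with
    | nil =>
      simp at hl hw
      subst hl; subst hw; exact ReflTransGen.refl
    | cons y t' =>
      have h1 : R x y := (List.isChain_cons_cons.mp hc).1
      have h2 : (y :: t').Chain' R := (List.isChain_cons_cons.mp hc).2
      have hl' : (y :: t').getLast? = some b := by
        rwa [List.getLast?_cons_cons] at hl
      rcases List.mem_cons.mp hw with h | h
      · subst h
        exact ReflTransGen.trans (ih h2 hl' y (by simp)) (hR _ _ h1)
      · exact ih h2 hl' w h

/-- every vertex of a chain of length ≥ 2 is an endpoint of some arc -/
theorem chain'_mem_prop {R : V → V → Prop} {p : V → Prop}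
    (hR : ∀ a b, R a b → p a ∧ p b) :
    ∀ {l : List V}, l.Chain' R → 2 ≤ l.length → ∀ w ∈ l, p w := by
  intro l
  induction l with
  | nil => intro _ _ w hw; simp at hw
  | cons x t ih =>
    intro hc hlen w hw
    cases t with
    | nil => simp at hlen
    | cons y t' =>
      have h1 : R x y := (List.isChain_cons_cons.mp hc).1
      have h2 : (y :: t').Chain' R := (List.isChain_cons_cons.mp hc).2
      rcases List.mem_cons.mp hw with h | h
      · subst h; exact (hR _ _ h1).1
      · cases t' with
        | nil =>
          simp at h; subst h; exact (hR _ _ h1).2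
        | cons z t'' => exact ih h2 (by simp) w h

theorem chain'_T_dwalk : ∀ {l : List V} {a b : V}, l.Chain' T → l.head? = some a →
    l.getLast? = some b → DWalk T a b (l.length - 1) := by
  intro l
  induction l with
  | nil => intro a b _ hh; simp at hh
  | cons x t ih =>
    intro a b hc hh hl
    simp at hh; subst hh
    cases t with
    | nil =>
      simp at hl; subst hl
      exact DWalk.refl x
    | cons y t' =>
      have h1 : T x y := (List.isChain_cons_cons.mp hc).1
      have h2 : (y :: t').Chain' T := (List.isChain_cons_cons.mp hc).2
      have hl' : (y :: t').getLast? = some b := by rwa [List.getLast?_cons_cons] at hl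
      have := ih h2 rfl hl'
      have harith : (x :: y :: t').length - 1 = ((y :: t').length - 1) + 1 := by
        simp
      rw [harith]
      exact DWalk.cons h1 this

section Tree2

variable (hr : ∀ v, ¬ T v r) (hu : ∀ v, v ≠ r → ∃! u, T u v)
  (hlvl : ∀ v, DWalk T r v (lvl v))

include hr hu hlvl

/-- The vertices of the tree interval between `u` and `v`. -/
theorem dwalk_interval {u v : V} {n : ℕ} (h : DWalk T u v n) :
    ∃ l : List V, l.head? = some u ∧ l.getLast? = some v ∧ l.Chain' T ∧
      l.length = n + 1 ∧ l.Pairwise (fun a b => lvl a < lvl b) ∧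
      (∀ w ∈ l, Anc T u w ∧ Anc T w v) ∧ (∀ w, Anc T u w → Anc T w v → w ∈ l) := by
  induction h with
  | refl v =>
    refine ⟨[v], rfl, rfl, List.isChain_singleton v, rfl, by simp, ?_, ?_⟩
    · intro w hw; simp at hw; subst hw; exact ⟨ReflTransGen.refl, ReflTransGen.refl⟩
    · intro w h1 h2
      simp [anc_antisymm hr hu hlvl h2 h1]
  | @cons a b c n hT w ih =>
    obtain ⟨l, hh, hl, hc, hlen, hpw, hmem, hchar⟩ := ih
    have hlne : l ≠ [] := by intro h; rw [h] at hlen; simp at hlen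
    refine ⟨a :: l, rfl, ?_, ?_, by simp [hlen], ?_, ?_, ?_⟩
    · exact List.mem_getLast?_cons hl
    · refine List.isChain_cons.mpr ⟨?_, hc⟩
      intro y hy; rw [hh] at hy; cases hy; exact hT
    · refine List.pairwise_cons.mpr ⟨?_, hpw⟩
      intro w' hw'
      have hb := (hmem w' hw').1
      have h1 : lvl b ≤ lvl w' := anc_lvl_le hr hu hlvl hb
      have h2 : lvl b = lvl a + 1 := lvl_succ hr hu hlvl hT
      omega
    · intro w' hw'
      rcases List.mem_cons.mp hw' with h | h
      · subst h
        exact ⟨ReflTransGen.refl, dwalk_anc (DWalk.cons hT w)⟩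
      · obtain ⟨h1, h2⟩ := hmem w' h
        exact ⟨ReflTransGen.head hT h1, h2⟩
    · intro w' h1 h2
      by_cases hwa : w' = a
      · simp [hwa]
      · have hlt : lvl a < lvl w' := anc_lvl_lt hr hu hlvl h1 (Ne.symm hwa)
        have hwk := anc_dwalk hr hu hlvl h1
        have harith : lvl w' - lvl a = (lvl w' - lvl a - 1) + 1 := by omega
        rw [harith] at hwk
        cases hwk with
        | @cons _ b'' _ _ hT' w2 =>
          have hb''v : Anc T b'' c := ReflTransGen.trans (dwalk_anc w2) h2
          have hbv : Anc T b c := dwalk_anc w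
          have hlv : lvl b'' = lvl b := by
            rw [lvl_succ hr hu hlvl hT', lvl_succ hr hu hlvl hT]
          have e1 : Anc T b'' b := anc_of_anc_anc hr hu hlvl hb''v hbv (le_of_eq hlv)
          have e2 : Anc T b b'' := anc_of_anc_anc hr hu hlvl hbv hb''v (le_of_eq hlv.symm)
          have heq : b'' = b := anc_antisymm hr hu hlvl e1 e2
          subst heq
          exact List.mem_cons_of_mem _ (hchar w' (dwalk_anc w2) h2)

/-- uniqueness of T-chains with given endpoints -/
theorem tchain_unique :
    ∀ (l₁ : List V) (l₂ : List V) (a b : V), l₁.Chain' T → l₂.Chain' T →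
      l₁.head? = some a → l₂.head? = some a → l₁.getLast? = some b →
      l₂.getLast? = some b → l₁ = l₂ := by
  intro l₁
  induction l₁ with
  | nil => intro l₂ a b _ _ hh₁; simp at hh₁
  | cons p t ih =>
    intro l₂ a b hc₁ hc₂ hh₁ hh₂ hl₁ hl₂
    simp at hh₁
    cases l₂ with
    | nil => simp at hh₂
    | cons q t₂ =>
      simp at hh₂
      have hpq : p = q := by rw [hh₁, hh₂]
      subst hpq
      cases t with
      | nil =>
        simp at hl₁
        cases t₂ with
        | nil => rfl
        | cons y₂ t₂' =>
          exfalso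
          have h1 : T p y₂ := (List.isChain_cons_cons.mp hc₂).1
          have h2 : (y₂ :: t₂').Chain' T := (List.isChain_cons_cons.mp hc₂).2
          have hl₂' : (y₂ :: t₂').getLast? = some b := by
            rwa [List.getLast?_cons_cons] at hl₂
          have hanc : Anc T y₂ b :=
            chain'_asc_last (fun a b h => ReflTransGen.single h) h2 hl₂' y₂ (by simp)
          have hle := anc_lvl_le hr hu hlvl hanc
          have := lvl_succ hr hu hlvl h1
          have hpb : lvl p = lvl b := by rw [hl₁]
          omega
      | cons y t' =>
        cases t₂ with
        | nil =>
          exfalso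
          simp at hl₂
          have h1 : T p y := (List.isChain_cons_cons.mp hc₁).1
          have h2 : (y :: t').Chain' T := (List.isChain_cons_cons.mp hc₁).2
          have hl₁' : (y :: t').getLast? = some b := by
            rwa [List.getLast?_cons_cons] at hl₁
          have hanc : Anc T y b :=
            chain'_asc_last (fun a b h => ReflTransGen.single h) h2 hl₁' y (by simp)
          have hle := anc_lvl_le hr hu hlvl hanc
          have := lvl_succ hr hu hlvl h1
          have hpb : lvl p = lvl b := by rw [hl₂]
          omega
        | cons y₂ t₂' =>
          have h1 : T p y := (List.isChain_cons_cons.mp hc₁).1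
          have h1₂ : T p y₂ := (List.isChain_cons_cons.mp hc₂).1
          have h2 : (y :: t').Chain' T := (List.isChain_cons_cons.mp hc₁).2
          have h2₂ : (y₂ :: t₂').Chain' T := (List.isChain_cons_cons.mp hc₂).2
          have hl₁' : (y :: t').getLast? = some b := by
            rwa [List.getLast?_cons_cons] at hl₁
          have hl₂' : (y₂ :: t₂').getLast? = some b := by
            rwa [List.getLast?_cons_cons] at hl₂
          have hyb : Anc T y b :=
            chain'_asc_last (fun a b h => ReflTransGen.single h) h2 hl₁' y (by simp)
          have hy₂b : Anc T y₂ b :=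
            chain'_asc_last (fun a b h => ReflTransGen.single h) h2₂ hl₂' y₂ (by simp)
          have hlv : lvl y = lvl y₂ := by
            rw [lvl_succ hr hu hlvl h1, lvl_succ hr hu hlvl h1₂]
          have e1 : Anc T y y₂ := anc_of_anc_anc hr hu hlvl hyb hy₂b (le_of_eq hlv)
          have e2 : Anc T y₂ y := anc_of_anc_anc hr hu hlvl hy₂b hyb (le_of_eq hlv.symm)
          have heq : y = y₂ := anc_antisymm hr hu hlvl e1 e2
          subst heq
          rw [ih (y :: t₂') y b h2 h2₂ rfl rfl hl₁' hl₂']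

/-- membership characterisation for T-chains -/
theorem tchain_mem_char {l : List V} {a b : V} (hc : l.Chain' T)
    (hh : l.head? = some a) (hl : l.getLast? = some b) :
    ∀ w, Anc T a w → Anc T w b → w ∈ l := by
  intro w h1 h2
  have hw := chain'_T_dwalk hc hh hl
  obtain ⟨l', hh', hl', hc', hlen', _, _, hchar'⟩ := dwalk_interval hr hu hlvl hw
  have heq := tchain_unique hr hu hlvl l l' a b hc hc' hh hh' hl hl'
  rw [heq]
  exact hchar' w h1 h2

end Tree2

/- ---------- list helpers ---------- -/

theorem mem_pint {l : List V} {v : V} (h : v ∈ pint l) : v ∈ l := by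
  unfold pint at h
  exact List.mem_of_mem_tail (List.dropLast_subset _ h)

theorem pint_cases {l : List V} {v a b : V} (hv : v ∈ l) (hh : l.head? = some a)
    (hl : l.getLast? = some b) : v = a ∨ v = b ∨ v ∈ pint l := by
  cases l with
  | nil => simp at hv
  | cons x t =>
    simp at hh; subst hh
    rcases List.mem_cons.mp hv with h | h
    · exact Or.inl h
    · cases t with
      | nil => simp at h
      | cons y t' =>
        have htne : (y :: t') ≠ [] := by simp
        have hlast : (y :: t').getLast htne = b := by
          have : (y :: t').getLast? = some b := by rwa [List.getLast?_cons_cons] at hl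
          rw [List.getLast?_eq_getLast htne] at this
          exact (Option.some_inj.mp this)
        have hsplit := List.dropLast_append_getLast htne
        rw [hlast] at hsplit
        have : v ∈ (y :: t').dropLast ++ [b] := by rw [hsplit]; exact h
        rcases List.mem_append.mp this with h' | h'
        · right; right
          unfold pint
          simpa using h'
        · simp at h'; exact Or.inr (Or.inl h')

theorem head_not_mem_pint {l : List V} {a : V} (hnd : l.Nodup) (hh : l.head? = some a) :
    a ∉ pint l := by
  cases l with
  | nil => simp at hh
  | cons x t =>
    simp at hh; subst hh
    intro hmem
    unfold pint at hmem
    simp at hmem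
    have hxt : x ∈ t := List.dropLast_subset _ hmem
    exact (List.nodup_cons.mp hnd).1 hxt

theorem last_not_mem_pint {l : List V} {b : V} (hnd : l.Nodup) (hl : l.getLast? = some b) :
    b ∉ pint l := by
  cases l with
  | nil => simp at hl
  | cons x t =>
    intro hmem
    unfold pint at hmem
    simp at hmem
    cases t with
    | nil => simp at hmem
    | cons y t' =>
      have htne : (y :: t') ≠ [] := by simp
      have hlast : (y :: t').getLast htne = b := by
        have : (y :: t').getLast? = some b := by rwa [List.getLast?_cons_cons] at hl
        rw [List.getLast?_eq_getLast htne] at this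
        exact (Option.some_inj.mp this)
      have hnd' : (y :: t').Nodup := (List.nodup_cons.mp hnd).2
      have hsplit := List.dropLast_append_getLast htne
      rw [hlast] at hsplit
      have : ((y :: t').dropLast ++ [b]).Nodup := by rw [hsplit]; exact hnd'
      have hdisj := (List.nodup_append'.mp this).2.2
      exact hdisj hmem (by simp)

theorem exists_lvl_max {P : V → Prop} :
    ∀ {l : List V}, (∃ v ∈ l, P v) → ∃ b ∈ l, P b ∧ ∀ q ∈ l, P q → lvl q ≤ lvl b := by
  intro l
  induction l with
  | nil => intro h; simp at h
  | cons x t ih =>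
    intro h
    by_cases ht : ∃ v ∈ t, P v
    · obtain ⟨b, hb, hPb, hmax⟩ := ih ht
      by_cases hx : P x ∧ lvl b ≤ lvl x
      · refine ⟨x, by simp, hx.1, ?_⟩
        intro q hq hPq
        rcases List.mem_cons.mp hq with h' | h'
        · subst h'; rfl
        · exact le_trans (hmax q h' hPq) hx.2
      · refine ⟨b, by simp [hb], hPb, ?_⟩
        intro q hq hPq
        rcases List.mem_cons.mp hq with h' | h'
        · subst h'
          rcases Classical.em (P q) with _ | hq'
          · by_contra hcon
            exact hx ⟨hPq, by omega⟩
          · exact absurd hPq hq'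
        · exact hmax q h' hPq
    · obtain ⟨v, hv, hPv⟩ := h
      have hvx : v = x := by
        rcases List.mem_cons.mp hv with h' | h'
        · exact h'
        · exact absurd ⟨v, h', hPv⟩ ht
      subst hvx
      refine ⟨v, by simp, hPv, ?_⟩
      intro q hq hPq
      rcases List.mem_cons.mp hq with h' | h'
      · subst h'; rfl
      · exact absurd ⟨q, h', hPq⟩ ht

/- ---------- IsDPath helpers ---------- -/

theorem isdpath_ne_nil {R : V → V → Prop} {a b : V} {l : List V} (h : IsDPath R a b l) :
    l ≠ [] := by
  intro hn; rw [hn] at h; simp [IsDPath] at h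

theorem isdpath_mem_head {R : V → V → Prop} {a b : V} {l : List V} (h : IsDPath R a b l) :
    a ∈ l := by
  obtain ⟨hh, _, _, _⟩ := h
  cases l with
  | nil => simp at hh
  | cons x t => simp at hh; subst hh; simp

theorem isdpath_mem_last {R : V → V → Prop} {a b : V} {l : List V} (h : IsDPath R a b l) :
    b ∈ l := by
  obtain ⟨_, hl, _, _⟩ := h
  cases l with
  | nil => simp at hl
  | cons x t =>
    have : (x :: t) ≠ [] := by simp
    rw [List.getLast?_eq_getLast this] at hl
    rw [← Option.some_inj.mp hl]
    exact List.getLast_mem this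

/-- extract the prefix of a path ending at a chosen vertex -/
theorem isdpath_prefix {R : V → V → Prop} {a b w : V} {l : List V}
    (h : IsDPath R a b l) (hw : w ∈ l) :
    ∃ p rest, l = p ++ rest ∧ IsDPath R a w p ∧ (∀ u ∈ p, u ∈ l) := by
  obtain ⟨hh, hl, hc, hnd⟩ := h
  obtain ⟨s, t, hst⟩ := List.append_of_mem hw
  refine ⟨s ++ [w], t, by rw [hst]; simp, ⟨?_, ?_, ?_, ?_⟩, ?_⟩
  · -- head
    cases s with
    | nil =>
      simp at hst ⊢
      rw [hst] at hh; simpa using hh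
    | cons x s' =>
      rw [hst] at hh
      simpa using hh
  · simp
  · have hpre : (s ++ [w]) <+: l := ⟨t, by rw [hst]; simp⟩
    exact hc.prefix hpre
  · have hpre : (s ++ [w]) <+: l := ⟨t, by rw [hst]; simp⟩
    exact hnd.sublist hpre.sublist
  · intro u hu
    have hpre : (s ++ [w]) <+: l := ⟨t, by rw [hst]; simp⟩
    exact hpre.sublist.mem hu

theorem isdpath_append {R : V → V → Prop} {a b c : V} {l l' : List V}
    (h1 : IsDPath R a b l) (h2 : IsDPath R b c l')
    (hdisj : ∀ v ∈ l, v ∈ l'.tail → False) : IsDPath R a c (l ++ l'.tail) := by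
  obtain ⟨hh1, hl1, hc1, hnd1⟩ := h1
  obtain ⟨hh2, hl2, hc2, hnd2⟩ := h2
  have hlne : l ≠ [] := by intro hn; rw [hn] at hh1; simp at hh1
  refine ⟨?_, ?_, ?_, ?_⟩
  · rw [List.head?_append_of_ne_nil _ hlne]; exact hh1
  · cases l' with
    | nil => simp at hh2
    | cons x t =>
      simp at hh2; subst hh2
      cases t with
      | nil =>
        simp at hl2 ⊢
        rw [hl2] at hl1; exact hl1
      | cons y t' =>
        simp only [List.tail_cons]
        rw [List.getLast?_append_of_ne_nil _ (by simp)]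
        rwa [List.getLast?_cons_cons] at hl2
  · rw [List.Chain', List.isChain_append]
    refine ⟨hc1, hc2.tail, ?_⟩
    intro x hx y hy
    rw [hl1] at hx
    cases l' with
    | nil => simp at hh2
    | cons z t =>
      simp at hh2; subst hh2
      cases t with
      | nil => simp at hy
      | cons y' t' =>
        simp at hy hx
        subst hy; subst hx
        exact (List.isChain_cons_cons.mp hc2).1
  · rw [List.nodup_append']
    exact ⟨hnd1, hnd2.sublist (List.tail_sublist _), fun v hv hv' => hdisj v hv hv'⟩

end BMAux2
namespace BMAux3

open Relation BMAux BMAux2 List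

variable {V : Type u} {D T : V → V → Prop} {r : V} {lvl : V → ℕ} {k i : ℕ}

theorem isdpath_of_imp {R R' : V → V → Prop} {a b : V} {l : List V}
    (h : ∀ a b, R a b → R' a b) (hp : IsDPath R a b l) : IsDPath R' a b l :=
  ⟨hp.1, hp.2.1, hp.2.2.1.imp h, hp.2.2.2⟩

theorem isdpath_len2 {R : V → V → Prop} {a b : V} {l : List V}
    (hp : IsDPath R a b l) (hne : a ≠ b) : 2 ≤ l.length := by
  obtain ⟨hh, hl, _, _⟩ := hp
  cases l with
  | nil => simp at hh
  | cons x t =>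
    cases t with
    | nil =>
      simp at hh hl
      exact absurd (hh.symm.trans hl) hne
    | cons y t' => simp


theorem nodup_of_pairwise_lvl {l : List V}
    (h : l.Pairwise (fun a b => lvl a < lvl b)) : l.Nodup :=
  h.imp (fun hab => by intro he; rw [he] at hab; omega)

theorem mod_k_gap {a b : ℕ} (hk : 1 ≤ k) (ha : a % k = i) (hb : b % k = i)
    (hab : a < b) : a + k ≤ b := by
  have h1 : k * (a / k) + a % k = a := Nat.div_add_mod a k
  have h2 : k * (b / k) + b % k = b := Nat.div_add_mod b k
  have hdiv : a / k < b / k := by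
    by_contra hcon
    push_neg at hcon
    have := Nat.mul_le_mul_left k hcon
    omega
  have := Nat.mul_le_mul_left k hdiv
  calc a + k = k * (a / k) + i + k := by omega
  _ = k * (a / k + 1) + i := by ring_nf
  _ ≤ k * (b / k) + i := by
      have := Nat.mul_le_mul_left k (by omega : a / k + 1 ≤ b / k)
      omega
  _ = b := by omega

/-- the canonical four-path configuration gives `HasSubdivCk111`. -/
theorem subdiv_of_config {x1 x2 y1 y2 : V} {p1 p2 p3 p4 : List V}
    (h1 : IsDPath D x1 y1 p1) (h2 : IsDPath D x2 y1 p2) (h3 : IsDPath D x2 y2 p3)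
    (h4 : IsDPath D x1 y2 p4)
    (hl1 : k + 1 ≤ p1.length) (hl2 : 2 ≤ p2.length) (hl3 : 2 ≤ p3.length)
    (hl4 : 2 ≤ p4.length)
    (hc1 : x1 ≠ x2) (hc2 : x1 ≠ y1) (hc3 : x1 ≠ y2) (hc4 : x2 ≠ y1) (hc5 : x2 ≠ y2)
    (hc6 : y1 ≠ y2)
    (hcorner : ∀ v, (v = x1 ∨ v = x2 ∨ v = y1 ∨ v = y2) →
      v ∉ pint p1 ∧ v ∉ pint p2 ∧ v ∉ pint p3 ∧ v ∉ pint p4)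
    (h12 : ∀ v ∈ pint p1, v ∉ pint p2) (h13 : ∀ v ∈ pint p1, v ∉ pint p3)
    (h14 : ∀ v ∈ pint p1, v ∉ pint p4) (h23 : ∀ v ∈ pint p2, v ∉ pint p3)
    (h24 : ∀ v ∈ pint p2, v ∉ pint p4) (h34 : ∀ v ∈ pint p3, v ∉ pint p4) :
    HasSubdivCk111 D k := by
  exact ⟨x1, x2, y1, y2, p1, p2, p3, p4, h1, h2, h3, h4, hl1, hl2, hl3, hl4,
    hc1, hc2, hc3, hc4, hc5, hc6, hcorner,
    fun v hv => ⟨h12 v hv, h13 v hv, h14 v hv⟩,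
    fun v hv => ⟨h23 v hv, h24 v hv⟩, h34⟩

/-- the data of a back-mixed cycle (fixed residue class `i`). -/
def BMC (D T : V → V → Prop) (lvl : V → ℕ) (k i : ℕ) (m : ℕ) (x y : ℕ → V)
    (P Q : ℕ → List V) (z1 : V) (l1 l2 : List V) : Prop :=
  (∀ j < m, IsDPath (Di2 D T lvl k i) (y j) (x j) (P j) ∧ 2 ≤ (P j).length) ∧
  (∀ j, j < m - 1 → IsDPath (Di2 D T lvl k i) (y j) (x ((j + 1) % m)) (Q j) ∧
    2 ≤ (Q j).length) ∧
  IsDPath D (y (m - 1)) (x 0) (Q (m - 1)) ∧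
  Q (m - 1) = l1 ++ z1 :: l2 ∧ z1 ≠ y (m - 1) ∧
  List.Chain' (Di2 D T lvl k i) (l1 ++ [z1]) ∧ List.Chain' T (z1 :: l2) ∧
  BlockDisjoint m y x P Q ∧
  (∀ j < m, ∀ v, (v ∈ P j ∨ v ∈ Q j) → Anc T v z1 → Anc T z1 v)

end BMAux3
namespace BMMain

open Relation BMAux BMAux2 BMAux3 List

variable {V : Type u}

theorem bmc_main (D T : V → V → Prop) (r : V) (lvl : V → ℕ) (k i : ℕ)
    (hk : 1 ≤ k) (hT : IsMaximalSOT D T r lvl) :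
    ∀ m, 3 ≤ m → ∀ (x y : ℕ → V) (P Q : ℕ → List V) (z1 : V) (l1 l2 : List V),
      BMC D T lvl k i m x y P Q z1 l1 l2 → HasSubdivCk111 D k := by
  intro m
  induction m using Nat.strong_induction_on with
  | _ m IH =>
  intro h3 x y P Q z1 l1 l2 hbmc
  obtain ⟨⟨_, harc, hr, hu0, _⟩, hlvl0, _⟩ := hT
  have hu : ∀ v, v ≠ r → ∃! u, T u v := fun v hv => hu0 v (Set.mem_univ v) hv
  have hlvl : ∀ v, DWalk T r v (lvl v) := hlvl0
  have hTD : ∀ a b, T a b → D a b := fun a b h => (harc a b h).1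
  obtain ⟨hP, hQ, hM, hMeq, hzy, hcD, hcT, hbd, hmin⟩ := hbmc
  obtain ⟨hyne, hxne, hyx, hint4, hPP, hQQ, hPQ⟩ := hbd
  have hdi2 : ∀ a b, Di2 D T lvl k i a b → Anc T b a := fun a b h => h.2.2.2
  have hdi2D : ∀ a b, Di2 D T lvl k i a b → D a b := fun a b h => h.1
  have hdi2m : ∀ a b, Di2 D T lvl k i a b → lvl a % k = i ∧ lvl b % k = i :=
    fun a b h => ⟨h.2.1, h.2.2.1⟩
  have hTanc : ∀ a b : V, T a b → Anc T a b := fun a b h => ReflTransGen.single h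
  -- block facts
  have hPfact : ∀ j < m, ∀ v ∈ P j, Anc T (x j) v ∧ Anc T v (y j) ∧ lvl v % k = i := by
    intro j hj v hv
    obtain ⟨⟨hh, hl, hc, hnd⟩, hlen⟩ := hP j hj
    exact ⟨chain'_desc_last hdi2 hc hl v hv, chain'_desc_head hdi2 hc hh v hv,
      chain'_mem_prop hdi2m hc hlen v hv⟩
  have hQfact : ∀ j, j < m - 1 → ∀ v ∈ Q j,
      Anc T (x (j + 1)) v ∧ Anc T v (y j) ∧ lvl v % k = i := by
    intro j hj v hv
    obtain ⟨⟨hh, hl, hc, hnd⟩, hlen⟩ := hQ j hj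
    rw [Nat.mod_eq_of_lt (by omega : j + 1 < m)] at hl
    exact ⟨chain'_desc_last hdi2 hc hl v hv, chain'_desc_head hdi2 hc hh v hv,
      chain'_mem_prop hdi2m hc hlen v hv⟩
  have hxP : ∀ j < m, x j ∈ P j := fun j hj => isdpath_mem_last (hP j hj).1
  have hyP : ∀ j < m, y j ∈ P j := fun j hj => isdpath_mem_head (hP j hj).1
  have hxQ : ∀ j, j < m - 1 → x (j + 1) ∈ Q j := by
    intro j hj
    have := isdpath_mem_last (hQ j hj).1
    rwa [Nat.mod_eq_of_lt (by omega : j + 1 < m)] at this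
  have hyQ : ∀ j, j < m - 1 → y j ∈ Q j := fun j hj => isdpath_mem_head (hQ j hj).1
  have hxy : ∀ j < m, Anc T (x j) (y j) := fun j hj =>
    (hPfact j hj (y j) (hyP j hj)).1
  have hxy' : ∀ j, j < m - 1 → Anc T (x (j + 1)) (y j) := fun j hj =>
    (hQfact j hj (y j) (hyQ j hj)).1
  have hx_mod : ∀ j < m, lvl (x j) % k = i := fun j hj =>
    (hPfact j hj (x j) (hxP j hj)).2.2
  -- mixed block facts
  have hMhead : (l1 ++ z1 :: l2).head? = some (y (m - 1)) := by rw [← hMeq]; exact hM.1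
  have hMlast : (l1 ++ z1 :: l2).getLast? = some (x 0) := by rw [← hMeq]; exact hM.2.1
  have hMnd : (l1 ++ z1 :: l2).Nodup := by rw [← hMeq]; exact hM.2.2.2
  have hl1ne : l1 ≠ [] := by
    intro h
    rw [h] at hMhead
    simp at hMhead
    exact hzy hMhead
  have hl1head : (l1 ++ [z1]).head? = some (y (m - 1)) := by
    cases l1 with
    | nil => exact absurd rfl hl1ne
    | cons a t => simp at hMhead ⊢; exact hMhead
  have hl1last : (l1 ++ [z1]).getLast? = some z1 := by simp
  have hl2last : (z1 :: l2).getLast? = some (x 0) := by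
    rwa [List.getLast?_append_of_ne_nil _ (by simp)] at hMlast
  have hz_le_x0 : Anc T z1 (x 0) := chain'_asc_last hTanc hcT hl2last z1 (by simp)
  have hl2fact : ∀ v ∈ z1 :: l2, Anc T z1 v ∧ Anc T v (x 0) := fun v hv =>
    ⟨chain'_asc_head hTanc hcT rfl v hv, chain'_asc_last hTanc hcT hl2last v hv⟩
  have hl1len : 2 ≤ (l1 ++ [z1]).length := by
    cases l1 with
    | nil => exact absurd rfl hl1ne
    | cons a t => simp
  have hl1fact : ∀ v ∈ l1 ++ [z1], Anc T z1 v ∧ Anc T v (y (m - 1)) ∧ lvl v % k = i := by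
    intro v hv
    exact ⟨chain'_desc_last hdi2 hcD hl1last v hv, chain'_desc_head hdi2 hcD hl1head v hv,
      chain'_mem_prop hdi2m hcD hl1len v hv⟩
  have hMsplit : ∀ v ∈ l1 ++ z1 :: l2, v ∈ l1 ++ [z1] ∨ v ∈ z1 :: l2 := by
    intro v hv
    rcases List.mem_append.mp hv with h | h
    · exact Or.inl (List.mem_append.mpr (Or.inl h))
    · exact Or.inr h
  have hzM : ∀ v ∈ Q (m - 1), Anc T z1 v := by
    intro v hv; rw [hMeq] at hv
    rcases hMsplit v hv with h | h
    · exact (hl1fact v h).1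
    · exact (hl2fact v h).1
  have hl2char : ∀ w, Anc T z1 w → Anc T w (x 0) → w ∈ z1 :: l2 :=
    tchain_mem_char hr hu hlvl hcT rfl hl2last
  -- z1 below everything
  have hz_le_x : ∀ j < m, Anc T z1 (x j) := by
    intro j
    induction j with
    | zero => intro _; exact hz_le_x0
    | succ j ih =>
      intro hj
      have hj' : j < m - 1 := by omega
      have hzyj : Anc T z1 (y j) := (ih (by omega)).trans (hxy j (by omega))
      rcases anc_total hr hu hlvl hzyj (hxy' j hj') with h | h
      · exact h
      · exact hmin j (by omega) (x (j + 1)) (Or.inr (hxQ j hj')) h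
  have hz_le_y : ∀ j < m, Anc T z1 (y j) := fun j hj => (hz_le_x j hj).trans (hxy j hj)
  have hz_all : ∀ j < m, ∀ v, (v ∈ P j ∨ v ∈ Q j) → Anc T z1 v := by
    intro j hj v hv
    rcases hv with hv | hv
    · rcases anc_total hr hu hlvl (hz_le_y j hj) (hPfact j hj v hv).2.1 with h | h
      · exact h
      · exact hmin j hj v (Or.inl hv) h
    · by_cases hjm : j = m - 1
      · subst hjm; exact hzM v hv
      · have hj' : j < m - 1 := by omega
        rcases anc_total hr hu hlvl (hz_le_y j hj) (hQfact j hj' v hv).2.1 with h | h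
        · exact h
        · exact hmin j hj v (Or.inr hv) h
  -- sinks are not on the mixed block
  have hx_notin_M : ∀ e, 1 ≤ e → e < m → x e ∉ Q (m - 1) := by
    intro e he1 hem hmem
    rcases pint_cases hmem hM.1 hM.2.1 with h | h | h
    · exact hyx (m - 1) (by omega) e hem h.symm
    · exact hxne e hem 0 (by omega) (by omega) h
    · exact (hint4 (m - 1) (by omega) e hem (x e) (Or.inr h)).2 rfl
  -- x 0 is below every other sink
  have hx0_le : ∀ e, 1 ≤ e → e < m → Anc T (x 0) (x e) := by
    intro e
    induction e with
    | zero => intro h _; omega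
    | succ e ih =>
      intro _ hem
      have hnotM : Anc T (x (e + 1)) (x 0) → False := by
        intro h
        have h1 : x (e + 1) ∈ z1 :: l2 := hl2char _ (hz_le_x (e + 1) hem) h
        have h2 : x (e + 1) ∈ Q (m - 1) := by
          rw [hMeq]; exact List.mem_append.mpr (Or.inr h1)
        exact hx_notin_M (e + 1) (by omega) hem h2
      by_cases he0 : e = 0
      · subst he0
        rcases anc_total hr hu hlvl (hxy 0 (by omega)) (hxy' 0 (by omega)) with h | h
        · exact h
        · exact absurd h hnotM
      · have hx0e : Anc T (x 0) (x e) := ih (by omega) (by omega)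
        rcases anc_total hr hu hlvl (hxy e (by omega)) (hxy' e (by omega)) with h | h
        · exact hx0e.trans h
        · rcases anc_total hr hu hlvl hx0e h with h' | h'
          · exact h'
          · exact absurd h' hnotM
  -- choice of a level-minimal sink
  obtain ⟨c, hcmem, hcmin0⟩ := Finset.exists_min_image (Finset.Ico 1 m)
    (fun e => lvl (x e)) ⟨1, Finset.mem_Ico.mpr ⟨le_refl 1, by omega⟩⟩
  have hc1 : 1 ≤ c := (Finset.mem_Ico.mp hcmem).1
  have hcm : c < m := (Finset.mem_Ico.mp hcmem).2
  have hcmin : ∀ e, 1 ≤ e → e < m → lvl (x c) ≤ lvl (x e) := fun e h1 h2 =>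
    hcmin0 e (Finset.mem_Ico.mpr ⟨h1, h2⟩)
  have hminc : ∀ v, Anc T v (x c) → v ≠ x c → ∀ e, 1 ≤ e → e < m →
      ¬ Anc T (x e) v := by
    intro v hv hne e he1 hem hcon
    have h1 : lvl v < lvl (x c) := anc_lvl_lt hr hu hlvl hv hne
    have h2 : lvl (x e) ≤ lvl v := anc_lvl_le hr hu hlvl hcon
    have := hcmin e he1 hem
    omega
  -- generic non-membership of corners in other blocks
  have hx_notin_P : ∀ e < m, ∀ j < m, e ≠ j → x e ∉ P j := by
    intro e hem j hj hne hmem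
    rcases pint_cases hmem (hP j hj).1.1 (hP j hj).1.2.1 with h | h | h
    · exact hyx j hj e hem h.symm
    · exact hxne e hem j hj hne h
    · exact (hint4 j hj e hem (x e) (Or.inl h)).2 rfl
  have hx_notin_Q : ∀ e < m, ∀ j, j < m - 1 → e ≠ j + 1 → x e ∉ Q j := by
    intro e hem j hj hne hmem
    have hl := (hQ j hj).1.2.1
    rw [Nat.mod_eq_of_lt (by omega : j + 1 < m)] at hl
    rcases pint_cases hmem (hQ j hj).1.1 hl with h | h | h
    · exact hyx j (by omega) e hem h.symm
    · exact hxne e hem (j + 1) (by omega) hne h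
    · exact (hint4 j (by omega) e hem (x e) (Or.inr h)).2 rfl
  have hy_notin_P : ∀ e < m, ∀ j < m, e ≠ j → y e ∉ P j := by
    intro e hem j hj hne hmem
    rcases pint_cases hmem (hP j hj).1.1 (hP j hj).1.2.1 with h | h | h
    · exact hyne e hem j hj hne h
    · exact hyx e hem j hj h
    · exact (hint4 j hj e hem (y e) (Or.inl h)).1 rfl
  have hy_notin_Q : ∀ e < m, ∀ j, j < m - 1 → e ≠ j → y e ∉ Q j := by
    intro e hem j hj hne hmem
    have hl := (hQ j hj).1.2.1
    rw [Nat.mod_eq_of_lt (by omega : j + 1 < m)] at hl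
    rcases pint_cases hmem (hQ j hj).1.1 hl with h | h | h
    · exact hyne e hem j (by omega) hne h
    · exact hyx e hem (j + 1) (by omega) h
    · exact (hint4 j (by omega) e hem (y e) (Or.inr h)).1 rfl
  have hy_notin_M : ∀ e < m, e ≠ m - 1 → y e ∉ Q (m - 1) := by
    intro e hem hne hmem
    rcases pint_cases hmem hM.1 hM.2.1 with h | h | h
    · exact hyne e hem (m - 1) (by omega) hne h
    · exact hyx e hem 0 (by omega) h
    · exact (hint4 (m - 1) (by omega) e hem (y e) (Or.inr h)).1 rfl
  -- selection of the jump base on the mixed block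
  have hx0c : Anc T (x 0) (x c) := hx0_le c hc1 hcm
  have hx0c_ne : x 0 ≠ x c := hxne 0 (by omega) c hcm (by omega)
  have hx0M : x 0 ∈ Q (m - 1) := isdpath_mem_last hM
  obtain ⟨b, hbM, hbP, hbmax⟩ := exists_lvl_max
    (P := fun q => Anc T (x 0) q ∧ Anc T q (x c) ∧ q ≠ x c)
    ⟨x 0, hx0M, ReflTransGen.refl, hx0c, hx0c_ne⟩
  obtain ⟨hbx0, hbσ, hbne⟩ := hbP
  obtain ⟨I, hIh, hIl, hIc, hIlen, hIpw, hImem, hIchar⟩ :=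
    dwalk_interval hr hu hlvl (anc_dwalk hr hu hlvl hbσ)
  have hInd : I.Nodup := nodup_of_pairwise_lvl hIpw
  have hIpath : IsDPath D b (x c) I := ⟨hIh, hIl, hIc.imp hTD, hInd⟩
  have hItail : I = b :: I.tail := by
    cases I with
    | nil => simp at hIh
    | cons a t => simp at hIh; simp [hIh]

  have hb_cases : b ∈ l1 ++ [z1] ∨ b = x 0 := by
    rw [hMeq] at hbM
    rcases hMsplit b hbM with h | h
    · exact Or.inl h
    · exact Or.inr (anc_antisymm hr hu hlvl (hl2fact b h).2 hbx0)
  have hb_mod : lvl b % k = i := by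
    rcases hb_cases with h | h
    · exact (hl1fact b h).2.2
    · rw [h]; exact hx_mod 0 (by omega)
  have hb_ne_y : b ≠ y (m - 1) := by
    intro h
    exact hminc b hbσ hbne (m - 1) (by omega) (by omega) (h ▸ hxy (m - 1) (by omega))
  have hIgap : k ≤ lvl (x c) - lvl b := by
    have h1 : lvl b < lvl (x c) := anc_lvl_lt hr hu hlvl hbσ hbne
    have := mod_k_gap hk hb_mod (hx_mod c hcm) h1
    omega
  have hIdirt : ∀ v ∈ I, v ≠ b → v ∉ Q (m - 1) := by
    intro v hv hvb hmem
    obtain ⟨hbv, hvσ'⟩ := hImem v hv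
    by_cases hvσ : v = x c
    · rw [hvσ] at hmem; exact hx_notin_M c hc1 hcm hmem
    · have h2 : lvl v ≤ lvl b := hbmax v hmem ⟨hbx0.trans hbv, hvσ', hvσ⟩
      have h3 : lvl b < lvl v := anc_lvl_lt hr hu hlvl hbv (fun h => hvb h.symm)
      omega
  have hIsink : ∀ v ∈ I, v ≠ x c → ∀ e, 1 ≤ e → e < m → ¬ Anc T (x e) v := by
    intro v hv hvσ e he1 hem hcon
    exact hminc v (hImem v hv).2 hvσ e he1 hem hcon
  have hIdirtP : ∀ v ∈ I, v ≠ x c → ∀ j < m, 1 ≤ j → v ∉ P j := by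
    intro v hv hvσ j hj hj1 hmem
    exact hIsink v hv hvσ j hj1 hj (hPfact j hj v hmem).1
  have hIdirtQ : ∀ v ∈ I, v ≠ x c → ∀ j, j < m - 1 → v ∉ Q j := by
    intro v hv hvσ j hj hmem
    exact hIsink v hv hvσ (j + 1) (by omega) (by omega) (hQfact j hj v hmem).1
  -- case analysis
  have hMtri : ∀ v ∈ Q (m - 1), v = y (m - 1) ∨ v = x 0 ∨ v ∈ pint (Q (m - 1)) :=
    fun v hv => pint_cases hv hM.1 hM.2.1
  by_cases hcase1 : c + 3 ≤ m
  · -- reduction dropping the sinks x 0, …, x (c-1)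
    have hm'3 : 3 ≤ m - c := by omega
    have hbItail : b ∉ I.tail := by
      have hnd := hInd; rw [hItail] at hnd
      exact (List.nodup_cons.mp hnd).1
    have hItmem : ∀ v ∈ I.tail, v ∈ I ∧ v ≠ b := by
      intro v hv
      refine ⟨by rw [hItail]; exact List.mem_cons_of_mem _ hv, ?_⟩
      intro h; subst h; exact hbItail hv
    have hIjunc : ∀ yy ∈ I.tail.head?, T b yy := by
      have h2 := hIc
      rw [hItail] at h2
      exact (List.isChain_cons.mp h2).1
    have key : ∀ (Mnew : List V) (z1n : V) (l1n l2n : List V),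
        IsDPath D (y (m - 1)) (x c) Mnew →
        Mnew = l1n ++ z1n :: l2n →
        List.Chain' (Di2 D T lvl k i) (l1n ++ [z1n]) →
        List.Chain' T (z1n :: l2n) →
        z1n ≠ y (m - 1) →
        (∀ v ∈ Mnew, v ∈ Q (m - 1) ∨ (v ∈ I ∧ v ≠ b)) →
        (∀ v ∈ Mnew, Anc T z1n v) →
        Anc T z1n (x c) → z1n ≠ x c →
        HasSubdivCk111 D k := by
      intro Mnew z1n l1n l2n hMn hMneq hcDn hcTn hz1ny hMdec hMge hz1nσ hz1nne
      have e2 : m - c - 1 + c = m - 1 := by omega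
      have hpintM : ∀ v ∈ pint Mnew,
          (v ∈ Q (m - 1) ∨ (v ∈ I ∧ v ≠ b)) ∧ v ≠ y (m - 1) ∧ v ≠ x c := by
        intro v hv
        refine ⟨hMdec v (mem_pint hv), ?_, ?_⟩
        · intro h; subst h; exact head_not_mem_pint hMn.2.2.2 hMn.1 hv
        · intro h; subst h; exact last_not_mem_pint hMn.2.2.2 hMn.2.1 hv
      refine IH (m - c) (by omega) hm'3 (fun j => x (j + c)) (fun j => y (j + c))
        (fun j => P (j + c)) (fun j => if j = m - c - 1 then Mnew else Q (j + c))
        z1n l1n l2n ⟨?_, ?_, ?_, ?_, ?_, ?_, ?_, ?_, ?_⟩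
      · intro j hj
        exact hP (j + c) (by omega)
      · intro j hj
        simp only []
        rw [if_neg (by omega : ¬ (j = m - c - 1))]
        have h2 := hQ (j + c) (by omega)
        rw [Nat.mod_eq_of_lt (by omega : j + c + 1 < m)] at h2
        rw [Nat.mod_eq_of_lt (by omega : j + 1 < m - c)]
        have e5 : j + 1 + c = j + c + 1 := by omega
        rw [e5]
        exact h2
      · simp only [if_pos rfl]
        rw [e2, Nat.zero_add]
        exact hMn
      · simp only [if_pos rfl]
        exact hMneq
      · show z1n ≠ y (m - c - 1 + c)
        rw [e2]
        exact hz1ny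
      · exact hcDn
      · exact hcTn
      · refine ⟨?_, ?_, ?_, ?_, ?_, ?_, ?_⟩
        · intro i1 hi1 j1 hj1 hne
          exact hyne (i1 + c) (by omega) (j1 + c) (by omega) (by omega)
        · intro i1 hi1 j1 hj1 hne
          exact hxne (i1 + c) (by omega) (j1 + c) (by omega) (by omega)
        · intro i1 hi1 j1 hj1
          exact hyx (i1 + c) (by omega) (j1 + c) (by omega)
        · intro i1 hi1 j1 hj1 v hv
          rcases hv with hv | hv
          · exact hint4 (i1 + c) (by omega) (j1 + c) (by omega) v (Or.inl hv)
          · replace hv : v ∈ pint (if i1 = m - c - 1 then Mnew else Q (i1 + c)) := hv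
            by_cases hi1m : i1 = m - c - 1
            · rw [if_pos hi1m] at hv
              obtain ⟨hvdec, hvhead, hvlast⟩ := hpintM v hv
              rcases hvdec with h | ⟨hI, hb'⟩
              · rcases hMtri v h with h' | h' | h'
                · exact absurd h' hvhead
                · subst h'
                  exact ⟨fun he => hyx (j1 + c) (by omega) 0 (by omega) he.symm,
                    fun he => hxne 0 (by omega) (j1 + c) (by omega) (by omega) he⟩
                · exact hint4 (m - 1) (by omega) (j1 + c) (by omega) v (Or.inr h')
              · constructor
                · intro he
                  subst he
                  exact hIsink _ hI hvlast (j1 + c) (by omega) (by omega)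
                    (hxy (j1 + c) (by omega))
                · intro he
                  subst he
                  exact hIsink _ hI hvlast (j1 + c) (by omega) (by omega) ReflTransGen.refl
            · rw [if_neg hi1m] at hv
              exact hint4 (i1 + c) (by omega) (j1 + c) (by omega) v (Or.inr hv)
        · intro i1 hi1 j1 hj1 hne v hv hv2
          exact hPP (i1 + c) (by omega) (j1 + c) (by omega) (by omega) v hv hv2
        · intro i1 hi1 j1 hj1 hne v hv hv2
          replace hv : v ∈ pint (if i1 = m - c - 1 then Mnew else Q (i1 + c)) := hv
          replace hv2 : v ∈ pint (if j1 = m - c - 1 then Mnew else Q (j1 + c)) := hv2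
          by_cases hi1m : i1 = m - c - 1
          · rw [if_pos hi1m] at hv
            rw [if_neg (by omega : ¬ (j1 = m - c - 1))] at hv2
            obtain ⟨hvdec, hvhead, hvlast⟩ := hpintM v hv
            rcases hvdec with h | ⟨hI, hb'⟩
            · rcases hMtri v h with h' | h' | h'
              · exact (hint4 (j1 + c) (by omega) (m - 1) (by omega) v (Or.inr hv2)).1 h'
              · exact (hint4 (j1 + c) (by omega) 0 (by omega) v (Or.inr hv2)).2 h'
              · exact hQQ (m - 1) (by omega) (j1 + c) (by omega) (by omega) v h' hv2
            · exact hIsink v hI hvlast (j1 + c + 1) (by omega) (by omega)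
                (hQfact (j1 + c) (by omega) v (mem_pint hv2)).1
          · rw [if_neg hi1m] at hv
            by_cases hj1m : j1 = m - c - 1
            · rw [if_pos hj1m] at hv2
              obtain ⟨hvdec, hvhead, hvlast⟩ := hpintM v hv2
              rcases hvdec with h | ⟨hI, hb'⟩
              · rcases hMtri v h with h' | h' | h'
                · exact (hint4 (i1 + c) (by omega) (m - 1) (by omega) v (Or.inr hv)).1 h'
                · exact (hint4 (i1 + c) (by omega) 0 (by omega) v (Or.inr hv)).2 h'
                · exact hQQ (i1 + c) (by omega) (m - 1) (by omega) (by omega) v hv h'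
              · exact hIsink v hI hvlast (i1 + c + 1) (by omega) (by omega)
                  (hQfact (i1 + c) (by omega) v (mem_pint hv)).1
            · rw [if_neg hj1m] at hv2
              exact hQQ (i1 + c) (by omega) (j1 + c) (by omega) (by omega) v hv hv2
        · intro i1 hi1 j1 hj1 v hv hv2
          replace hv2 : v ∈ pint (if j1 = m - c - 1 then Mnew else Q (j1 + c)) := hv2
          by_cases hj1m : j1 = m - c - 1
          · rw [if_pos hj1m] at hv2
            obtain ⟨hvdec, hvhead, hvlast⟩ := hpintM v hv2
            rcases hvdec with h | ⟨hI, hb'⟩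
            · rcases hMtri v h with h' | h' | h'
              · exact (hint4 (i1 + c) (by omega) (m - 1) (by omega) v (Or.inl hv)).1 h'
              · exact (hint4 (i1 + c) (by omega) 0 (by omega) v (Or.inl hv)).2 h'
              · exact hPQ (i1 + c) (by omega) (m - 1) (by omega) v hv h'
            · exact hIsink v hI hvlast (i1 + c) (by omega) (by omega)
                (hPfact (i1 + c) (by omega) v (mem_pint hv)).1
          · rw [if_neg hj1m] at hv2
            exact hPQ (i1 + c) (by omega) (j1 + c) (by omega) v hv hv2
      · intro j hj v hv
        rcases hv with hv | hv
        · intro hanc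
          exact absurd ((hPfact (j + c) (by omega) v hv).1.trans hanc)
            (hminc z1n hz1nσ hz1nne (j + c) (by omega) (by omega))
        · replace hv : v ∈ (if j = m - c - 1 then Mnew else Q (j + c)) := hv
          by_cases hjm : j = m - c - 1
          · rw [if_pos hjm] at hv
            intro _
            exact hMge v hv
          · rw [if_neg hjm] at hv
            intro hanc
            exact absurd ((hQfact (j + c) (by omega) v hv).1.trans hanc)
              (hminc z1n hz1nσ hz1nne (j + c + 1) (by omega) (by omega))
    rcases hb_cases with hbL | hbeq
    · -- the base b lies on the descending part of the mixed block
      have hLsub : (l1 ++ [z1]) <+ (l1 ++ z1 :: l2) := by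
        refine List.Sublist.append_left ?_ l1
        exact List.cons_sublist_cons.mpr (List.nil_sublist l2)
      have hLpath : IsDPath D (y (m - 1)) z1 (l1 ++ [z1]) :=
        ⟨hl1head, hl1last, hcD.imp hdi2D, hMnd.sublist hLsub⟩
      obtain ⟨p, rest, hsplit, hp, hpsub⟩ := isdpath_prefix hLpath hbL
      have hpDi2 : List.Chain' (Di2 D T lvl k i) p := hcD.prefix ⟨rest, hsplit.symm⟩
      have hpsubM : ∀ u ∈ p, u ∈ Q (m - 1) := by
        intro u hu
        rw [hMeq]
        rcases List.mem_append.mp (hpsub u hu) with h | h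
        · exact List.mem_append.mpr (Or.inl h)
        · simp at h; subst h; exact List.mem_append.mpr (Or.inr (by simp))
      have hMn : IsDPath D (y (m - 1)) (x c) (p ++ I.tail) := by
        refine isdpath_append hp hIpath ?_
        intro v hvp hvt
        obtain ⟨hvI, hvb⟩ := hItmem v hvt
        exact hIdirt v hvI hvb (hpsubM v hvp)
      have hpdl : p.dropLast ++ [b] = p := List.dropLast_append_getLast? b hp.2.1
      have hMneq : p ++ I.tail = p.dropLast ++ b :: I.tail := by
        rw [← hpdl]; simp
      have hcDn : List.Chain' (Di2 D T lvl k i) (p.dropLast ++ [b]) := by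
        rw [hpdl]; exact hpDi2
      have hcTn : List.Chain' T (b :: I.tail) := by rw [← hItail]; exact hIc
      have hMdec : ∀ v ∈ p ++ I.tail, v ∈ Q (m - 1) ∨ (v ∈ I ∧ v ≠ b) := by
        intro v hv
        rcases List.mem_append.mp hv with h | h
        · exact Or.inl (hpsubM v h)
        · exact Or.inr (hItmem v h)
      have hpge : ∀ v ∈ p, Anc T b v := chain'_desc_last hdi2 hpDi2 hp.2.1
      have hMge : ∀ v ∈ p ++ I.tail, Anc T b v := by
        intro v hv
        rcases List.mem_append.mp hv with h | h
        · exact hpge v h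
        · exact (hImem v (hItmem v h).1).1
      exact key (p ++ I.tail) b p.dropLast I.tail hMn hMneq hcDn hcTn hb_ne_y hMdec hMge hbσ hbne
    · -- the base is x 0 : extend the tree part of the mixed block
      subst hbeq
      have hMn : IsDPath D (y (m - 1)) (x c) (Q (m - 1) ++ I.tail) := by
        refine isdpath_append hM hIpath ?_
        intro v hvp hvt
        obtain ⟨hvI, hvb⟩ := hItmem v hvt
        exact hIdirt v hvI hvb hvp
      have hMneq : Q (m - 1) ++ I.tail = l1 ++ z1 :: (l2 ++ I.tail) := by
        rw [hMeq]; simp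
      have hcTn : List.Chain' T (z1 :: (l2 ++ I.tail)) := by
        have h2 : (z1 :: l2) ++ I.tail = z1 :: (l2 ++ I.tail) := by simp
        rw [← h2, List.Chain', List.isChain_append]
        refine ⟨hcT, hIc.tail, ?_⟩
        intro xx hxx yy hyy
        rw [hl2last] at hxx
        simp at hxx
        subst hxx
        exact hIjunc yy hyy
      have hMdec : ∀ v ∈ Q (m - 1) ++ I.tail, v ∈ Q (m - 1) ∨ (v ∈ I ∧ v ≠ x 0) := by
        intro v hv
        rcases List.mem_append.mp hv with h | h
        · exact Or.inl h
        · exact Or.inr (hItmem v h)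
      have hMge : ∀ v ∈ Q (m - 1) ++ I.tail, Anc T z1 v := by
        intro v hv
        rcases List.mem_append.mp hv with h | h
        · exact hzM v h
        · exact hz_le_x0.trans (hImem v (hItmem v h).1).1
      have hz1σ : Anc T z1 (x c) := hz_le_x0.trans hx0c
      have hz1neσ : z1 ≠ x c := by
        intro h
        exact hx0c_ne (anc_antisymm hr hu hlvl hx0c (h ▸ hz_le_x0))
      exact key (Q (m - 1) ++ I.tail) z1 l1 (l2 ++ I.tail) hMn hMneq hcD hcTn hzy
        hMdec hMge hz1σ hz1neσ
  · by_cases hcase2 : c = m - 2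
    · -- direct configuration at σ = x (m-2)
      subst hcase2
      obtain ⟨p, rest, hsplit, hp, hpsub⟩ := isdpath_prefix hM hbM
      have hbItail : b ∉ I.tail := by
        have hnd := hInd; rw [hItail] at hnd
        exact (List.nodup_cons.mp hnd).1
      have hItmem : ∀ v ∈ I.tail, v ∈ I ∧ v ≠ b := by
        intro v hv
        refine ⟨by rw [hItail]; exact List.mem_cons_of_mem _ hv, ?_⟩
        intro h; subst h; exact hbItail hv
      have hp1 : IsDPath D (y (m - 1)) (x (m - 2)) (p ++ I.tail) := by
        refine isdpath_append hp hIpath ?_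
        intro v hvp hvt
        obtain ⟨hvI, hvb⟩ := hItmem v hvt
        exact hIdirt v hvI hvb (hpsub v hvp)
      have hIlen' : I.tail.length = lvl (x (m - 2)) - lvl b := by
        have h2 : I.length = I.tail.length + 1 := by rw [hItail]; simp
        omega
      have hplen : 1 ≤ p.length := by
        have h2 := isdpath_ne_nil hp
        cases p with
        | nil => exact absurd rfl h2
        | cons _ _ => simp
      have hlen1 : k + 1 ≤ (p ++ I.tail).length := by
        rw [List.length_append]
        omega
      have hp1mem : ∀ v ∈ p ++ I.tail, v ∈ Q (m - 1) ∨ (v ∈ I ∧ v ≠ b) := by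
        intro v hv
        rcases List.mem_append.mp hv with h | h
        · exact Or.inl (hpsub v h)
        · exact Or.inr (hItmem v h)
      have hpint1 : ∀ v ∈ pint (p ++ I.tail),
          (v ∈ Q (m - 1) ∨ (v ∈ I ∧ v ≠ b)) ∧ v ≠ y (m - 1) ∧ v ≠ x (m - 2) := by
        intro v hv
        refine ⟨hp1mem v (mem_pint hv), ?_, ?_⟩
        · intro h; subst h; exact head_not_mem_pint hp1.2.2.2 hp1.1 hv
        · intro h; subst h; exact last_not_mem_pint hp1.2.2.2 hp1.2.1 hv
      have hMtri : ∀ v ∈ Q (m - 1), v = y (m - 1) ∨ v = x 0 ∨ v ∈ pint (Q (m - 1)) :=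
        fun v hv => pint_cases hv hM.1 hM.2.1
      have hQm2 := hQ (m - 2) (by omega)
      have hQm2path : IsDPath (Di2 D T lvl k i) (y (m - 2)) (x (m - 1)) (Q (m - 2)) := by
        have h2 := hQm2.1
        have e1 : m - 2 + 1 = m - 1 := by omega
        rwa [e1, Nat.mod_eq_of_lt (by omega)] at h2
      have hp2 : IsDPath D (y (m - 2)) (x (m - 2)) (P (m - 2)) :=
        isdpath_of_imp hdi2D (hP (m - 2) (by omega)).1
      have hp3 : IsDPath D (y (m - 2)) (x (m - 1)) (Q (m - 2)) := isdpath_of_imp hdi2D hQm2path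
      have hp4 : IsDPath D (y (m - 1)) (x (m - 1)) (P (m - 1)) :=
        isdpath_of_imp hdi2D (hP (m - 1) (by omega)).1
      refine subdiv_of_config hp1 hp2 hp3 hp4 hlen1 (hP (m - 2) (by omega)).2 hQm2.2
        (hP (m - 1) (by omega)).2
        (hyne (m - 1) (by omega) (m - 2) (by omega) (by omega))
        (hyx (m - 1) (by omega) (m - 2) (by omega))
        (hyx (m - 1) (by omega) (m - 1) (by omega))
        (hyx (m - 2) (by omega) (m - 2) (by omega))
        (hyx (m - 2) (by omega) (m - 1) (by omega))
        (hxne (m - 2) (by omega) (m - 1) (by omega) (by omega))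
        ?_ ?_ ?_ ?_ ?_ ?_ ?_
      · -- corners not in interiors
        intro v hv
        refine ⟨?_, ?_, ?_, ?_⟩
        · intro hmem
          obtain ⟨hvm, hvy, hvσ⟩ := hpint1 v hmem
          rcases hv with rfl | rfl | rfl | rfl
          · exact hvy rfl
          · rcases hvm with h | ⟨hI, hb⟩
            · exact hy_notin_M (m - 2) (by omega) (by omega) h
            · exact hIsink _ hI hvσ (m - 2) (by omega) (by omega) (hxy (m - 2) (by omega))
          · exact hvσ rfl
          · rcases hvm with h | ⟨hI, hb⟩
            · exact hx_notin_M (m - 1) (by omega) (by omega) h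
            · exact hIsink _ hI hvσ (m - 1) (by omega) (by omega) ReflTransGen.refl
        · intro hmem
          rcases hv with rfl | rfl | rfl | rfl
          · exact (hint4 (m - 2) (by omega) (m - 1) (by omega) _ (Or.inl hmem)).1 rfl
          · exact (hint4 (m - 2) (by omega) (m - 2) (by omega) _ (Or.inl hmem)).1 rfl
          · exact (hint4 (m - 2) (by omega) (m - 2) (by omega) _ (Or.inl hmem)).2 rfl
          · exact (hint4 (m - 2) (by omega) (m - 1) (by omega) _ (Or.inl hmem)).2 rfl
        · intro hmem
          rcases hv with rfl | rfl | rfl | rfl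
          · exact (hint4 (m - 2) (by omega) (m - 1) (by omega) _ (Or.inr hmem)).1 rfl
          · exact (hint4 (m - 2) (by omega) (m - 2) (by omega) _ (Or.inr hmem)).1 rfl
          · exact (hint4 (m - 2) (by omega) (m - 2) (by omega) _ (Or.inr hmem)).2 rfl
          · exact (hint4 (m - 2) (by omega) (m - 1) (by omega) _ (Or.inr hmem)).2 rfl
        · intro hmem
          rcases hv with rfl | rfl | rfl | rfl
          · exact (hint4 (m - 1) (by omega) (m - 1) (by omega) _ (Or.inl hmem)).1 rfl
          · exact (hint4 (m - 1) (by omega) (m - 2) (by omega) _ (Or.inl hmem)).1 rfl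
          · exact (hint4 (m - 1) (by omega) (m - 2) (by omega) _ (Or.inl hmem)).2 rfl
          · exact (hint4 (m - 1) (by omega) (m - 1) (by omega) _ (Or.inl hmem)).2 rfl
      · -- pint p1 vs pint p2
        intro v hv hmem2
        obtain ⟨hvm, hvy, hvσ⟩ := hpint1 v hv
        rcases hvm with h | ⟨hI, hb⟩
        · rcases hMtri v h with h' | h' | h'
          · exact (hint4 (m - 2) (by omega) (m - 1) (by omega) v (Or.inl hmem2)).1 h'
          · exact (hint4 (m - 2) (by omega) 0 (by omega) v (Or.inl hmem2)).2 h'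
          · exact hPQ (m - 2) (by omega) (m - 1) (by omega) v hmem2 h'
        · exact hIdirtP v hI hvσ (m - 2) (by omega) (by omega) (mem_pint hmem2)
      · -- pint p1 vs pint p3
        intro v hv hmem2
        obtain ⟨hvm, hvy, hvσ⟩ := hpint1 v hv
        rcases hvm with h | ⟨hI, hb⟩
        · rcases hMtri v h with h' | h' | h'
          · exact (hint4 (m - 2) (by omega) (m - 1) (by omega) v (Or.inr hmem2)).1 h'
          · exact (hint4 (m - 2) (by omega) 0 (by omega) v (Or.inr hmem2)).2 h'
          · exact hQQ (m - 1) (by omega) (m - 2) (by omega) (by omega) v h' hmem2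
        · exact hIdirtQ v hI hvσ (m - 2) (by omega) (mem_pint hmem2)
      · -- pint p1 vs pint p4
        intro v hv hmem2
        obtain ⟨hvm, hvy, hvσ⟩ := hpint1 v hv
        rcases hvm with h | ⟨hI, hb⟩
        · rcases hMtri v h with h' | h' | h'
          · exact (hint4 (m - 1) (by omega) (m - 1) (by omega) v (Or.inl hmem2)).1 h'
          · exact (hint4 (m - 1) (by omega) 0 (by omega) v (Or.inl hmem2)).2 h'
          · exact hPQ (m - 1) (by omega) (m - 1) (by omega) v hmem2 h'
        · exact hIdirtP v hI hvσ (m - 1) (by omega) (by omega) (mem_pint hmem2)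
      · -- pint p2 vs pint p3
        intro v hv hmem
        exact hPQ (m - 2) (by omega) (m - 2) (by omega) v hv hmem
      · -- pint p2 vs pint p4
        intro v hv hmem
        exact hPP (m - 2) (by omega) (m - 1) (by omega) (by omega) v hv hmem
      · -- pint p3 vs pint p4
        intro v hv hmem
        exact hPQ (m - 1) (by omega) (m - 2) (by omega) v hmem hv
    · have hcm1 : c = m - 1 := by omega
      by_cases hm3 : m = 3
      · -- direct configuration, m = 3, σ = x 2
        subst hm3
        have hc2 : c = 2 := by omega
        subst hc2
        have hP0D : IsDPath D (y 0) (x 0) (P 0) := isdpath_of_imp hdi2D (hP 0 (by omega)).1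
        obtain ⟨b2, hb2P0, hb2prop, hb2max⟩ := exists_lvl_max
          (P := fun q => Anc T (x 0) q ∧ Anc T q (x 2) ∧ q ≠ x 2)
          ⟨x 0, hxP 0 (by omega), ReflTransGen.refl, hx0c, hx0c_ne⟩
        obtain ⟨hb2x0, hb2σ, hb2ne⟩ := hb2prop
        obtain ⟨I2, hI2h, hI2l, hI2c, hI2len, hI2pw, hI2mem, hI2char⟩ :=
          dwalk_interval hr hu hlvl (anc_dwalk hr hu hlvl hb2σ)
        have hI2nd : I2.Nodup := nodup_of_pairwise_lvl hI2pw
        have hI2path : IsDPath D b2 (x 2) I2 := ⟨hI2h, hI2l, hI2c.imp hTD, hI2nd⟩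
        have hI2tail : I2 = b2 :: I2.tail := by
          cases I2 with
          | nil => simp at hI2h
          | cons a t => simp at hI2h; simp [hI2h]
        have hb2Itail : b2 ∉ I2.tail := by
          have hnd := hI2nd; rw [hI2tail] at hnd
          exact (List.nodup_cons.mp hnd).1
        have hI2tmem : ∀ v ∈ I2.tail, v ∈ I2 ∧ v ≠ b2 := by
          intro v hv
          refine ⟨by rw [hI2tail]; exact List.mem_cons_of_mem _ hv, ?_⟩
          intro h; subst h; exact hb2Itail hv
        have hb2mod : lvl b2 % k = i := (hPfact 0 (by omega) b2 hb2P0).2.2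
        have hI2gap : k ≤ lvl (x 2) - lvl b2 := by
          have h1 : lvl b2 < lvl (x 2) := anc_lvl_lt hr hu hlvl hb2σ hb2ne
          have := mod_k_gap hk hb2mod (hx_mod 2 (by omega)) h1
          omega
        have hI2dirt : ∀ v ∈ I2, v ≠ b2 → v ∉ P 0 := by
          intro v hv hvb hmem
          obtain ⟨hbv, hvσ'⟩ := hI2mem v hv
          by_cases hvσ : v = x 2
          · rw [hvσ] at hmem; exact hx_notin_P 2 (by omega) 0 (by omega) (by omega) hmem
          · have h2 : lvl v ≤ lvl b2 := hb2max v hmem ⟨hb2x0.trans hbv, hvσ', hvσ⟩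
            have h3 : lvl b2 < lvl v := anc_lvl_lt hr hu hlvl hbv (fun h => hvb h.symm)
            omega
        have hI2sink : ∀ v ∈ I2, v ≠ x 2 → ∀ e, 1 ≤ e → e < 3 → ¬ Anc T (x e) v := by
          intro v hv hvσ e he1 hem hcon
          exact hminc v (hI2mem v hv).2 hvσ e he1 hem hcon
        obtain ⟨p, rest, hsplit, hp, hpsub⟩ := isdpath_prefix hP0D hb2P0
        have hp1 : IsDPath D (y 0) (x 2) (p ++ I2.tail) := by
          refine isdpath_append hp hI2path ?_
          intro v hvp hvt
          obtain ⟨hvI, hvb⟩ := hI2tmem v hvt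
          exact hI2dirt v hvI hvb (hpsub v hvp)
        have hI2len' : I2.tail.length = lvl (x 2) - lvl b2 := by
          have h2 : I2.length = I2.tail.length + 1 := by rw [hI2tail]; simp
          omega
        have hplen : 1 ≤ p.length := by
          have h2 := isdpath_ne_nil hp
          cases p with
          | nil => exact absurd rfl h2
          | cons _ _ => simp
        have hlen1 : k + 1 ≤ (p ++ I2.tail).length := by
          rw [List.length_append]
          omega
        have hpint1 : ∀ v ∈ pint (p ++ I2.tail),
            (v ∈ P 0 ∨ (v ∈ I2 ∧ v ≠ b2)) ∧ v ≠ y 0 ∧ v ≠ x 2 := by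
          intro v hv
          have hvm := mem_pint hv
          refine ⟨?_, ?_, ?_⟩
          · rcases List.mem_append.mp hvm with h | h
            · exact Or.inl (hpsub v h)
            · exact Or.inr (hI2tmem v h)
          · intro h; subst h; exact head_not_mem_pint hp1.2.2.2 hp1.1 hv
          · intro h; subst h; exact last_not_mem_pint hp1.2.2.2 hp1.2.1 hv
        have hP0tri : ∀ v ∈ P 0, v = y 0 ∨ v = x 0 ∨ v ∈ pint (P 0) :=
          fun v hv => pint_cases hv (hP 0 (by omega)).1.1 (hP 0 (by omega)).1.2.1
        have hQ1 := hQ 1 (by omega)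
        have hQ1path : IsDPath (Di2 D T lvl k i) (y 1) (x 2) (Q 1) := by
          have h2 := hQ1.1
          rwa [Nat.mod_eq_of_lt (by omega : 2 < 3)] at h2
        have hQ0 := hQ 0 (by omega)
        have hQ0path : IsDPath (Di2 D T lvl k i) (y 0) (x 1) (Q 0) := by
          have h2 := hQ0.1
          rwa [Nat.mod_eq_of_lt (by omega : 1 < 3)] at h2
        have hp2 : IsDPath D (y 1) (x 2) (Q 1) := isdpath_of_imp hdi2D hQ1path
        have hp3 : IsDPath D (y 1) (x 1) (P 1) := isdpath_of_imp hdi2D (hP 1 (by omega)).1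
        have hp4 : IsDPath D (y 0) (x 1) (Q 0) := isdpath_of_imp hdi2D hQ0path
        refine subdiv_of_config hp1 hp2 hp3 hp4 hlen1 hQ1.2 (hP 1 (by omega)).2 hQ0.2
          (hyne 0 (by omega) 1 (by omega) (by omega))
          (hyx 0 (by omega) 2 (by omega))
          (hyx 0 (by omega) 1 (by omega))
          (hyx 1 (by omega) 2 (by omega))
          (hyx 1 (by omega) 1 (by omega))
          (hxne 2 (by omega) 1 (by omega) (by omega))
          ?_ ?_ ?_ ?_ ?_ ?_ ?_
        · intro v hv
          refine ⟨?_, ?_, ?_, ?_⟩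
          · intro hmem
            obtain ⟨hvm, hvy, hvσ⟩ := hpint1 v hmem
            rcases hv with rfl | rfl | rfl | rfl
            · exact hvy rfl
            · rcases hvm with h | ⟨hI, hb⟩
              · exact hy_notin_P 1 (by omega) 0 (by omega) (by omega) h
              · exact hI2sink _ hI hvσ 1 (by omega) (by omega) (hxy 1 (by omega))
            · exact hvσ rfl
            · rcases hvm with h | ⟨hI, hb⟩
              · exact hx_notin_P 1 (by omega) 0 (by omega) (by omega) h
              · exact hI2sink _ hI hvσ 1 (by omega) (by omega) ReflTransGen.refl
          · intro hmem
            rcases hv with rfl | rfl | rfl | rfl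
            · exact (hint4 1 (by omega) 0 (by omega) _ (Or.inr hmem)).1 rfl
            · exact (hint4 1 (by omega) 1 (by omega) _ (Or.inr hmem)).1 rfl
            · exact (hint4 1 (by omega) 2 (by omega) _ (Or.inr hmem)).2 rfl
            · exact (hint4 1 (by omega) 1 (by omega) _ (Or.inr hmem)).2 rfl
          · intro hmem
            rcases hv with rfl | rfl | rfl | rfl
            · exact (hint4 1 (by omega) 0 (by omega) _ (Or.inl hmem)).1 rfl
            · exact (hint4 1 (by omega) 1 (by omega) _ (Or.inl hmem)).1 rfl
            · exact (hint4 1 (by omega) 2 (by omega) _ (Or.inl hmem)).2 rfl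
            · exact (hint4 1 (by omega) 1 (by omega) _ (Or.inl hmem)).2 rfl
          · intro hmem
            rcases hv with rfl | rfl | rfl | rfl
            · exact (hint4 0 (by omega) 0 (by omega) _ (Or.inr hmem)).1 rfl
            · exact (hint4 0 (by omega) 1 (by omega) _ (Or.inr hmem)).1 rfl
            · exact (hint4 0 (by omega) 2 (by omega) _ (Or.inr hmem)).2 rfl
            · exact (hint4 0 (by omega) 1 (by omega) _ (Or.inr hmem)).2 rfl
        · -- pint p1 vs pint p2 (Q 1)
          intro v hv hmem2
          obtain ⟨hvm, hvy, hvσ⟩ := hpint1 v hv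
          rcases hvm with h | ⟨hI, hb⟩
          · rcases hP0tri v h with h' | h' | h'
            · exact (hint4 1 (by omega) 0 (by omega) v (Or.inr hmem2)).1 h'
            · exact (hint4 1 (by omega) 0 (by omega) v (Or.inr hmem2)).2 h'
            · exact hPQ 0 (by omega) 1 (by omega) v h' hmem2
          · exact hI2sink v hI hvσ 2 (by omega) (by omega)
              (hQfact 1 (by omega) v (mem_pint hmem2)).1
        · -- pint p1 vs pint p3 (P 1)
          intro v hv hmem2
          obtain ⟨hvm, hvy, hvσ⟩ := hpint1 v hv
          rcases hvm with h | ⟨hI, hb⟩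
          · rcases hP0tri v h with h' | h' | h'
            · exact (hint4 1 (by omega) 0 (by omega) v (Or.inl hmem2)).1 h'
            · exact (hint4 1 (by omega) 0 (by omega) v (Or.inl hmem2)).2 h'
            · exact hPP 0 (by omega) 1 (by omega) (by omega) v h' hmem2
          · exact hI2sink v hI hvσ 1 (by omega) (by omega)
              (hPfact 1 (by omega) v (mem_pint hmem2)).1
        · -- pint p1 vs pint p4 (Q 0)
          intro v hv hmem2
          obtain ⟨hvm, hvy, hvσ⟩ := hpint1 v hv
          rcases hvm with h | ⟨hI, hb⟩
          · rcases hP0tri v h with h' | h' | h'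
            · exact (hint4 0 (by omega) 0 (by omega) v (Or.inr hmem2)).1 h'
            · exact (hint4 0 (by omega) 0 (by omega) v (Or.inr hmem2)).2 h'
            · exact hPQ 0 (by omega) 0 (by omega) v h' hmem2
          · exact hI2sink v hI hvσ 1 (by omega) (by omega)
              (hQfact 0 (by omega) v (mem_pint hmem2)).1
        · -- pint p2 (Q 1) vs pint p3 (P 1)
          intro v hv hmem
          exact hPQ 1 (by omega) 1 (by omega) v hmem hv
        · -- pint p2 (Q 1) vs pint p4 (Q 0)
          intro v hv hmem
          exact hQQ 1 (by omega) 0 (by omega) (by omega) v hv hmem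
        · -- pint p3 (P 1) vs pint p4 (Q 0)
          intro v hv hmem
          exact hPQ 1 (by omega) 0 (by omega) v hv hmem
      · -- reversing reduction
        subst hcm1
        have hm4 : 4 ≤ m := by omega
        have hP0D : IsDPath D (y 0) (x 0) (P 0) := isdpath_of_imp hdi2D (hP 0 (by omega)).1
        obtain ⟨b2, hb2P0, hb2prop, hb2max⟩ := exists_lvl_max
          (P := fun q => Anc T (x 0) q ∧ Anc T q (x (m - 1)) ∧ q ≠ x (m - 1))
          ⟨x 0, hxP 0 (by omega), ReflTransGen.refl, hx0c, hx0c_ne⟩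
        obtain ⟨hb2x0, hb2σ, hb2ne⟩ := hb2prop
        obtain ⟨I2, hI2h, hI2l, hI2c, hI2len, hI2pw, hI2mem, hI2char⟩ :=
          dwalk_interval hr hu hlvl (anc_dwalk hr hu hlvl hb2σ)
        have hI2nd : I2.Nodup := nodup_of_pairwise_lvl hI2pw
        have hI2path : IsDPath D b2 (x (m - 1)) I2 := ⟨hI2h, hI2l, hI2c.imp hTD, hI2nd⟩
        have hI2tail : I2 = b2 :: I2.tail := by
          cases I2 with
          | nil => simp at hI2h
          | cons a t => simp at hI2h; simp [hI2h]
        have hb2Itail : b2 ∉ I2.tail := by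
          have hnd := hI2nd; rw [hI2tail] at hnd
          exact (List.nodup_cons.mp hnd).1
        have hI2tmem : ∀ v ∈ I2.tail, v ∈ I2 ∧ v ≠ b2 := by
          intro v hv
          refine ⟨by rw [hI2tail]; exact List.mem_cons_of_mem _ hv, ?_⟩
          intro h; subst h; exact hb2Itail hv
        have hI2dirt : ∀ v ∈ I2, v ≠ b2 → v ∉ P 0 := by
          intro v hv hvb hmem
          obtain ⟨hbv, hvσ'⟩ := hI2mem v hv
          by_cases hvσ : v = x (m - 1)
          · rw [hvσ] at hmem
            exact hx_notin_P (m - 1) (by omega) 0 (by omega) (by omega) hmem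
          · have h2 : lvl v ≤ lvl b2 := hb2max v hmem ⟨hb2x0.trans hbv, hvσ', hvσ⟩
            have h3 : lvl b2 < lvl v := anc_lvl_lt hr hu hlvl hbv (fun h => hvb h.symm)
            omega
        have hI2sink : ∀ v ∈ I2, v ≠ x (m - 1) → ∀ e, 1 ≤ e → e < m → ¬ Anc T (x e) v := by
          intro v hv hvσ e he1 hem hcon
          exact hminc v (hI2mem v hv).2 hvσ e he1 hem hcon
        have hb2_ne_y0 : b2 ≠ y 0 := by
          intro h
          exact hminc b2 hb2σ hb2ne 1 (by omega) (by omega) (h ▸ hxy' 0 (by omega))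
        -- the prefix of P 0 ending at b2, as a Di2 path
        obtain ⟨p, rest, hsplit, hp, hpsub⟩ := isdpath_prefix (hP 0 (by omega)).1 hb2P0
        have hpD : IsDPath D (y 0) b2 p := isdpath_of_imp hdi2D hp
        have hMn : IsDPath D (y 0) (x (m - 1)) (p ++ I2.tail) := by
          refine isdpath_append hpD hI2path ?_
          intro v hvp hvt
          obtain ⟨hvI, hvb⟩ := hI2tmem v hvt
          exact hI2dirt v hvI hvb (hpsub v hvp)
        have hpdl : p.dropLast ++ [b2] = p := List.dropLast_append_getLast? b2 hp.2.1
        have hMneq : p ++ I2.tail = p.dropLast ++ b2 :: I2.tail := by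
          rw [← hpdl]; simp
        have hcDn : List.Chain' (Di2 D T lvl k i) (p.dropLast ++ [b2]) := by
          rw [hpdl]; exact hp.2.2.1
        have hcTn : List.Chain' T (b2 :: I2.tail) := by rw [← hI2tail]; exact hI2c
        have hMdec : ∀ v ∈ p ++ I2.tail, v ∈ P 0 ∨ (v ∈ I2 ∧ v ≠ b2) := by
          intro v hv
          rcases List.mem_append.mp hv with h | h
          · exact Or.inl (hpsub v h)
          · exact Or.inr (hI2tmem v h)
        have hpge : ∀ v ∈ p, Anc T b2 v := chain'_desc_last hdi2 hp.2.2.1 hp.2.1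
        have hMge : ∀ v ∈ p ++ I2.tail, Anc T b2 v := by
          intro v hv
          rcases List.mem_append.mp hv with h | h
          · exact hpge v h
          · exact (hI2mem v (hI2tmem v h).1).1
        have hpintM : ∀ v ∈ pint (p ++ I2.tail),
            (v ∈ P 0 ∨ (v ∈ I2 ∧ v ≠ b2)) ∧ v ≠ y 0 ∧ v ≠ x (m - 1) := by
          intro v hv
          refine ⟨hMdec v (mem_pint hv), ?_, ?_⟩
          · intro h; subst h; exact head_not_mem_pint hMn.2.2.2 hMn.1 hv
          · intro h; subst h; exact last_not_mem_pint hMn.2.2.2 hMn.2.1 hv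
        have hP0tri : ∀ v ∈ P 0, v = y 0 ∨ v = x 0 ∨ v ∈ pint (P 0) :=
          fun v hv => pint_cases hv (hP 0 (by omega)).1.1 (hP 0 (by omega)).1.2.1
        refine IH (m - 1) (by omega) (by omega) (fun j => x (m - 1 - j))
          (fun j => y (m - 2 - j)) (fun j => Q (m - 2 - j))
          (fun j => if j = m - 2 then p ++ I2.tail else P (m - 2 - j))
          b2 p.dropLast I2.tail ⟨?_, ?_, ?_, ?_, ?_, ?_, ?_, ?_, ?_⟩
        · show ∀ j < m - 1, IsDPath (Di2 D T lvl k i) (y (m - 2 - j)) (x (m - 1 - j))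
            (Q (m - 2 - j)) ∧ 2 ≤ (Q (m - 2 - j)).length
          intro j hj
          have h2 := hQ (m - 2 - j) (by omega)
          have e3 : (m - 2 - j + 1) % m = m - 1 - j := by
            rw [Nat.mod_eq_of_lt (by omega)]; omega
          rw [e3] at h2
          exact h2
        · show ∀ j, j < m - 1 - 1 → IsDPath (Di2 D T lvl k i) (y (m - 2 - j))
            (x (m - 1 - ((j + 1) % (m - 1))))
            (if j = m - 2 then p ++ I2.tail else P (m - 2 - j)) ∧
            2 ≤ (if j = m - 2 then p ++ I2.tail else P (m - 2 - j)).length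
          intro j hj
          rw [if_neg (by omega : ¬ (j = m - 2))]
          have h2 := hP (m - 2 - j) (by omega)
          have e4 : m - 1 - ((j + 1) % (m - 1)) = m - 2 - j := by
            rw [Nat.mod_eq_of_lt (by omega)]; omega
          rw [e4]
          exact h2
        · show IsDPath D (y (m - 2 - (m - 1 - 1))) (x (m - 1 - 0))
            (if m - 1 - 1 = m - 2 then p ++ I2.tail else P (m - 2 - (m - 1 - 1)))
          rw [if_pos (by omega), (by omega : m - 2 - (m - 1 - 1) = 0),
            (by omega : m - 1 - 0 = m - 1)]
          exact hMn
        · show (if m - 1 - 1 = m - 2 then p ++ I2.tail else P (m - 2 - (m - 1 - 1))) =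
            p.dropLast ++ b2 :: I2.tail
          rw [if_pos (by omega)]
          exact hMneq
        · show b2 ≠ y (m - 2 - (m - 1 - 1))
          rw [(by omega : m - 2 - (m - 1 - 1) = 0)]
          exact hb2_ne_y0
        · exact hcDn
        · exact hcTn
        · refine ⟨?_, ?_, ?_, ?_, ?_, ?_, ?_⟩
          · intro i1 hi1 j1 hj1 hne
            exact hyne (m - 2 - i1) (by omega) (m - 2 - j1) (by omega) (by omega)
          · intro i1 hi1 j1 hj1 hne
            exact hxne (m - 1 - i1) (by omega) (m - 1 - j1) (by omega) (by omega)
          · intro i1 hi1 j1 hj1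
            exact hyx (m - 2 - i1) (by omega) (m - 1 - j1) (by omega)
          · intro i1 hi1 j1 hj1 v hv
            rcases hv with hv | hv
            · exact ⟨(hint4 (m - 2 - i1) (by omega) (m - 2 - j1) (by omega) v (Or.inr hv)).1,
                (hint4 (m - 2 - i1) (by omega) (m - 1 - j1) (by omega) v (Or.inr hv)).2⟩
            · replace hv : v ∈ pint (if i1 = m - 2 then p ++ I2.tail else P (m - 2 - i1)) := hv
              by_cases hi1m : i1 = m - 2
              · rw [if_pos hi1m] at hv
                obtain ⟨hvdec, hvhead, hvlast⟩ := hpintM v hv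
                rcases hvdec with h | ⟨hI, hb'⟩
                · rcases hP0tri v h with h' | h' | h'
                  · exact absurd h' hvhead
                  · subst h'
                    refine ⟨?_, ?_⟩
                    · intro he
                      exact hyx (m - 2 - j1) (by omega) 0 (by omega) he.symm
                    · intro he
                      exact hxne 0 (by omega) (m - 1 - j1) (by omega) (by omega) he
                  · exact ⟨(hint4 0 (by omega) (m - 2 - j1) (by omega) v (Or.inl h')).1,
                      (hint4 0 (by omega) (m - 1 - j1) (by omega) v (Or.inl h')).2⟩
                · constructor
                  · intro he
                    replace he : v = y (m - 2 - j1) := he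
                    by_cases hj1m : j1 = m - 2
                    · have e0 : m - 2 - j1 = 0 := by omega
                      rw [e0] at he
                      exact hvhead he
                    · subst he
                      exact hI2sink _ hI hvlast (m - 2 - j1) (by omega) (by omega)
                        (hxy (m - 2 - j1) (by omega))
                  · intro he
                    subst he
                    exact hI2sink _ hI hvlast (m - 1 - j1) (by omega) (by omega)
                      ReflTransGen.refl
              · rw [if_neg hi1m] at hv
                exact ⟨(hint4 (m - 2 - i1) (by omega) (m - 2 - j1) (by omega) v (Or.inl hv)).1,
                  (hint4 (m - 2 - i1) (by omega) (m - 1 - j1) (by omega) v (Or.inl hv)).2⟩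
          · intro i1 hi1 j1 hj1 hne v hv hv2
            exact hQQ (m - 2 - i1) (by omega) (m - 2 - j1) (by omega) (by omega) v hv hv2
          · intro i1 hi1 j1 hj1 hne v hv hv2
            replace hv : v ∈ pint (if i1 = m - 2 then p ++ I2.tail else P (m - 2 - i1)) := hv
            replace hv2 : v ∈ pint (if j1 = m - 2 then p ++ I2.tail else P (m - 2 - j1)) := hv2
            by_cases hi1m : i1 = m - 2
            · rw [if_pos hi1m] at hv
              rw [if_neg (by omega : ¬ (j1 = m - 2))] at hv2
              obtain ⟨hvdec, hvhead, hvlast⟩ := hpintM v hv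
              rcases hvdec with h | ⟨hI, hb'⟩
              · rcases hP0tri v h with h' | h' | h'
                · exact (hint4 (m - 2 - j1) (by omega) 0 (by omega) v (Or.inl hv2)).1 h'
                · exact (hint4 (m - 2 - j1) (by omega) 0 (by omega) v (Or.inl hv2)).2 h'
                · exact hPP 0 (by omega) (m - 2 - j1) (by omega) (by omega) v h' hv2
              · exact hI2sink v hI hvlast (m - 2 - j1) (by omega) (by omega)
                  (hPfact (m - 2 - j1) (by omega) v (mem_pint hv2)).1
            · rw [if_neg hi1m] at hv
              by_cases hj1m : j1 = m - 2
              · rw [if_pos hj1m] at hv2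
                obtain ⟨hvdec, hvhead, hvlast⟩ := hpintM v hv2
                rcases hvdec with h | ⟨hI, hb'⟩
                · rcases hP0tri v h with h' | h' | h'
                  · exact (hint4 (m - 2 - i1) (by omega) 0 (by omega) v (Or.inl hv)).1 h'
                  · exact (hint4 (m - 2 - i1) (by omega) 0 (by omega) v (Or.inl hv)).2 h'
                  · exact hPP (m - 2 - i1) (by omega) 0 (by omega) (by omega) v hv h'
                · exact hI2sink v hI hvlast (m - 2 - i1) (by omega) (by omega)
                    (hPfact (m - 2 - i1) (by omega) v (mem_pint hv)).1
              · rw [if_neg hj1m] at hv2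
                exact hPP (m - 2 - i1) (by omega) (m - 2 - j1) (by omega) (by omega) v hv hv2
          · intro i1 hi1 j1 hj1 v hv hv2
            replace hv2 : v ∈ pint (if j1 = m - 2 then p ++ I2.tail else P (m - 2 - j1)) := hv2
            by_cases hj1m : j1 = m - 2
            · rw [if_pos hj1m] at hv2
              obtain ⟨hvdec, hvhead, hvlast⟩ := hpintM v hv2
              rcases hvdec with h | ⟨hI, hb'⟩
              · rcases hP0tri v h with h' | h' | h'
                · exact (hint4 (m - 2 - i1) (by omega) 0 (by omega) v (Or.inr hv)).1 h'
                · exact (hint4 (m - 2 - i1) (by omega) 0 (by omega) v (Or.inr hv)).2 h'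
                · exact hPQ 0 (by omega) (m - 2 - i1) (by omega) v h' hv
              · have h2 := (hQfact (m - 2 - i1) (by omega) v (mem_pint hv)).1
                have e5 : m - 2 - i1 + 1 = m - 1 - i1 := by omega
                rw [e5] at h2
                exact hI2sink v hI hvlast (m - 1 - i1) (by omega) (by omega) h2
            · rw [if_neg hj1m] at hv2
              exact hPQ (m - 2 - j1) (by omega) (m - 2 - i1) (by omega) v hv2 hv
        · intro j hj v hv
          rcases hv with hv | hv
          · intro hanc
            have h2 := (hQfact (m - 2 - j) (by omega) v hv).1
            have e5 : m - 2 - j + 1 = m - 1 - j := by omega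
            rw [e5] at h2
            exact absurd (h2.trans hanc)
              (hminc b2 hb2σ hb2ne (m - 1 - j) (by omega) (by omega))
          · replace hv : v ∈ (if j = m - 2 then p ++ I2.tail else P (m - 2 - j)) := hv
            by_cases hjm : j = m - 2
            · rw [if_pos hjm] at hv
              intro _
              exact hMge v hv
            · rw [if_neg hjm] at hv
              intro hanc
              exact absurd ((hPfact (m - 2 - j) (by omega) v hv).1.trans hanc)
                (hminc b2 hb2σ hb2ne (m - 2 - j) (by omega) (by omega))

end BMMain
/-- a back-mixed cycle forces a subdivision of C(k,1,1,1). -/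
theorem backMixed_cycle_gives_subdivision {V : Type u} (D T : V → V → Prop) (r : V)
    (lvl : V → ℕ) (k : ℕ) (hk : 1 ≤ k) (hT : IsMaximalSOT D T r lvl)
    (h : HasBackMixedCycle D T lvl k) : HasSubdivCk111 D k := by
  obtain ⟨i, hik, m, hm3, x, y, P, Q, z1, l1, l2, h1, h2, h3, h4, h5, h6, h7, h8, h9⟩ := h
  exact BMMain.bmc_main D T r lvl k i hk hT m hm3 x y P Q z1 l1 l2
    ⟨h1, h2, h3, h4, h5, h6, h7, h8, h9⟩
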